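/- arXiv:math/0701936 — 8 statements merged into one kernel-verified Lean document; each statement's English description precedes it below -/
import Mathlib

section
/- Let M be an almost triangular matrix of size n+1 over an associative ring R (i.e., M_{ij} = 0 for i > j+1 and M_{j+1,j} = -1). Define P_0 = 1 and P_{j+1} = Σ_{i=0}^{j} M_{ij} P_i. Then P_{n+1} = det_right(M). -/
/-- The right determinant of a square matrix over a (possibly noncommutative) ring. -/
def detRight {R : Type*} [Ring R] {n : ℕ} (M : Matrix (Fin (n+1)) (Fin (n+1)) R) : R :=
  ∑ σ : Equiv.Perm (Fin (n+1)),
    (Equiv.Perm.sign σ : ℤ) • (List.ofFn (fun k : Fin (n+1) => M (σ k.rev) k.rev)).prod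

namespace AT
variable {R : Type*} [Ring R]

/-- rightdet for any size, 1 for size 0. -/
def dR {m : ℕ} (N : Matrix (Fin m) (Fin m) R) : R :=
  ∑ σ : Equiv.Perm (Fin m),
    (Equiv.Perm.sign σ : ℤ) • (List.ofFn (fun k : Fin m => N (σ k.rev) k.rev)).prod

/-- leading principal submatrix -/
def lead {m : ℕ} (N : Matrix (Fin m) (Fin m) R) (j : ℕ) (h : j ≤ m) :
    Matrix (Fin j) (Fin j) R :=
  fun a b => N ⟨a, a.isLt.trans_le h⟩ ⟨b, b.isLt.trans_le h⟩

lemma ofFn_rev' {α : Type*} {m : ℕ} (f : Fin m → α) :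
    List.ofFn (fun k => f k.rev) = (List.ofFn f).reverse := by
  apply List.ext_getElem
  · simp
  · intro i h1 h2
    simp only [List.getElem_ofFn, List.getElem_reverse, List.length_ofFn] at *
    congr 1
    ext
    simp [Fin.val_rev]
    omega

lemma dR_zero (N : Matrix (Fin 0) (Fin 0) R) : dR N = 1 := by
  simp [dR]


section cyc
variable {m : ℕ}

def cyc (i : Fin (m+1)) : Equiv.Perm (Fin (m+1)) :=
  (Fin.revPerm * (Fin.cycleRange i.rev : Equiv.Perm (Fin (m+1))) * Fin.revPerm)⁻¹

lemma cyc_fwd_apply (i x : Fin (m+1)) :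
    (cyc i)⁻¹ x = Fin.rev (Fin.cycleRange i.rev (Fin.rev x)) := by
  simp [cyc, Equiv.Perm.mul_apply]

lemma cyc_eq_iff {i x y : Fin (m+1)} : cyc i x = y ↔ (cyc i)⁻¹ y = x := by
  constructor
  · rintro rfl; simp
  · rintro rfl; simp

lemma cyc_lt {i x : Fin (m+1)} (h : x < i) : cyc i x = x := by
  rw [cyc_eq_iff, cyc_fwd_apply, Fin.cycleRange_of_gt (by rwa [Fin.rev_lt_rev]), Fin.rev_rev]

lemma cyc_last (i : Fin (m+1)) : cyc i (Fin.last m) = i := by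
  rw [cyc_eq_iff, cyc_fwd_apply, Fin.cycleRange_self, Fin.rev_zero]

lemma cyc_mid {i x : Fin (m+1)} (h1 : (i:ℕ) ≤ x) (h2 : (x:ℕ) < m) :
    cyc i x = ⟨(x:ℕ)+1, by omega⟩ := by
  rw [cyc_eq_iff, cyc_fwd_apply]
  have hxi : i < (⟨(x:ℕ)+1, by omega⟩ : Fin (m+1)) := by
    rw [Fin.lt_def]; simp; omega
  rw [Fin.cycleRange_of_lt (by rwa [Fin.rev_lt_rev])]
  ext
  rw [Fin.val_rev, Fin.val_add_one]
  split
  · next heq =>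
      exfalso
      have := congrArg Fin.val heq
      simp [Fin.val_rev, Fin.val_last] at this
      omega
  · simp [Fin.val_rev]
    omega

lemma sign_cyc (i : Fin (m+1)) : Equiv.Perm.sign (cyc i) = (-1)^(m - (i:ℕ)) := by
  have h : (Fin.rev i : ℕ) = m - (i:ℕ) := by
    rw [Fin.val_rev]; omega
  rw [cyc]
  rw [map_inv, map_mul, map_mul, Fin.sign_cycleRange, h]
  have : ∀ u v : ℤˣ, (u * v * u)⁻¹ = v⁻¹ := by
    intro u v
    rw [mul_comm u v, mul_assoc, Int.units_mul_self, mul_one]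
  rw [this]
  simp [← inv_pow]

end cyc

section F
variable {m : ℕ}

def emb (i : Fin (m+1)) : Fin (i:ℕ) ≃ {x : Fin (m+1) // (x:ℕ) < (i:ℕ)} where
  toFun a := ⟨⟨a, a.isLt.trans i.isLt⟩, a.isLt⟩
  invFun x := ⟨x.1, x.2⟩
  left_inv a := rfl
  right_inv x := rfl

def F (i : Fin (m+1)) (τ : Equiv.Perm (Fin (i:ℕ))) : Equiv.Perm (Fin (m+1)) :=
  cyc i * τ.extendDomain (emb i)

lemma F_lt (i : Fin (m+1)) (τ : Equiv.Perm (Fin (i:ℕ))) {x : Fin (m+1)} (h : (x:ℕ) < i) :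
    F i τ x = ⟨(τ ⟨x, h⟩ : ℕ), (τ ⟨x, h⟩).isLt.trans i.isLt⟩ := by
  rw [F, Equiv.Perm.mul_apply, Equiv.Perm.extendDomain_apply_subtype _ (emb i) h]
  exact cyc_lt (by simp [emb, Fin.lt_def])

lemma F_mid (i : Fin (m+1)) (τ : Equiv.Perm (Fin (i:ℕ))) {x : Fin (m+1)}
    (h1 : (i:ℕ) ≤ x) (h2 : (x:ℕ) < m) : F i τ x = ⟨(x:ℕ)+1, by omega⟩ := by
  rw [F, Equiv.Perm.mul_apply, Equiv.Perm.extendDomain_apply_not_subtype _ (emb i) (by omega)]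
  exact cyc_mid h1 h2

lemma F_last (i : Fin (m+1)) (τ : Equiv.Perm (Fin (i:ℕ))) : F i τ (Fin.last m) = i := by
  rw [F, Equiv.Perm.mul_apply,
    Equiv.Perm.extendDomain_apply_not_subtype _ (emb i) (by simp; omega)]
  exact cyc_last i

lemma sign_F (i : Fin (m+1)) (τ : Equiv.Perm (Fin (i:ℕ))) :
    Equiv.Perm.sign (F i τ) = (-1)^(m - (i:ℕ)) * Equiv.Perm.sign τ := by
  rw [F, map_mul, sign_cyc, Equiv.Perm.sign_extendDomain]

end F

section good
variable {m : ℕ}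

def isGood (σ : Equiv.Perm (Fin (m+1))) : Prop := ∀ k : Fin (m+1), (σ k : ℕ) ≤ (k:ℕ) + 1

instance : DecidablePred (isGood (m := m)) := fun _ => Fintype.decidableForallFintype

lemma forced {σ : Equiv.Perm (Fin (m+1))} (hg : isGood σ) {k : Fin (m+1)}
    (hik : (σ (Fin.last m) : ℕ) ≤ (k:ℕ)) (hkm : (k:ℕ) < m) : (σ k : ℕ) = (k:ℕ) + 1 := by
  by_contra hne
  have hk : (σ k : ℕ) ≤ (k:ℕ) := by have := hg k; omega
  set T : Finset (Fin (m+1)) := Finset.univ.filter (fun x => (x:ℕ) ≤ (k:ℕ)) with hT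
  have himg : T.image σ ⊆ T := by
    intro y hy
    rw [Finset.mem_image] at hy
    obtain ⟨x, hx, rfl⟩ := hy
    rw [hT, Finset.mem_filter] at hx ⊢
    refine ⟨Finset.mem_univ _, ?_⟩
    rcases eq_or_lt_of_le hx.2 with heq | hlt
    · have : x = k := Fin.ext heq
      subst this; exact hk
    · have := hg x; omega
  have hcard : T.card ≤ (T.image σ).card := by
    rw [Finset.card_image_of_injective _ σ.injective]
  have heq : T.image σ = T := Finset.eq_of_subset_of_card_le himg hcard
  have hmem : σ (Fin.last m) ∈ T := by
    rw [hT, Finset.mem_filter]; exact ⟨Finset.mem_univ _, hik⟩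
  rw [← heq, Finset.mem_image] at hmem
  obtain ⟨x, hx, hxe⟩ := hmem
  have : x = Fin.last m := σ.injective hxe
  subst this
  rw [hT, Finset.mem_filter, Fin.val_last] at hx
  omega

def Qtail (σ : Equiv.Perm (Fin (m+1))) : Prop :=
  ∀ k : Fin (m+1), (σ (Fin.last m) : ℕ) ≤ (k:ℕ) → (k:ℕ) < m → (σ k : ℕ) = (k:ℕ) + 1

instance : DecidablePred (Qtail (m := m)) := fun _ => Fintype.decidableForallFintype

lemma Qtail_F (i : Fin (m+1)) (τ : Equiv.Perm (Fin (i:ℕ))) : Qtail (F i τ) := by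
  intro k hik hkm
  rw [F_last] at hik
  rw [F_mid i τ hik hkm]

lemma Q_lt_iff {σ : Equiv.Perm (Fin (m+1))} (hQ : Qtail σ) (x : Fin (m+1)) :
    (x:ℕ) < (σ (Fin.last m) : ℕ) ↔ (σ x : ℕ) < (σ (Fin.last m) : ℕ) := by
  set i := σ (Fin.last m) with hi
  have key : ∀ x : Fin (m+1), (x:ℕ) < (i:ℕ) → (σ x : ℕ) < (i:ℕ) := by
    intro x hx
    by_contra hge
    push_neg at hge
    have hxl : x ≠ Fin.last m := by
      intro h; subst h
      rw [Fin.val_last] at hx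
      omega
    rcases eq_or_lt_of_le hge with heq | hlt
    · exact hxl (σ.injective (Fin.ext heq.symm))
    · -- i < σ x : consider k with (k:ℕ) = σ x - 1 ∈ [i, m)
      have hσx : (σ x : ℕ) ≤ m := Nat.lt_succ_iff.mp (σ x).isLt
      set k : Fin (m+1) := ⟨(σ x : ℕ) - 1, by omega⟩ with hk
      have h1 : (i:ℕ) ≤ (k:ℕ) := by simp [hk]; omega
      have h2 : (k:ℕ) < m := by simp [hk]; omega
      have := hQ k h1 h2
      have hks : σ k = σ x := Fin.ext (by simp [hk] at this ⊢; omega)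
      have : k = x := σ.injective hks
      rw [← this, hk] at hx
      simp at hx
      omega
  constructor
  · exact key x
  · intro h
    by_contra hge
    push_neg at hge
    rcases eq_or_lt_of_le (Fin.le_last x) with hlast | hlt
    · have : x = Fin.last m := Fin.ext (by simpa using congrArg Fin.val hlast)
      subst this; omega
    · have hxm : (x:ℕ) < m := by simpa [Fin.lt_def] using hlt
      have := hQ x hge hxm
      omega

lemma Q_surj {σ : Equiv.Perm (Fin (m+1))} (hQ : Qtail σ) :
    ∃ τ : Equiv.Perm (Fin ((σ (Fin.last m) : ℕ))), F (σ (Fin.last m)) τ = σ := by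
  set i := σ (Fin.last m) with hi
  have hiff : ∀ x : Fin (m+1), ((x:ℕ) < (i:ℕ)) ↔ ((σ x : ℕ) < (i:ℕ)) := Q_lt_iff hQ
  refine ⟨(emb i).permCongr.symm (σ.subtypePerm (fun x => (hiff x).symm)), ?_⟩
  ext x
  by_cases hlt : (x:ℕ) < (i:ℕ)
  · rw [F_lt i _ hlt]
    simp [Equiv.permCongr, Equiv.equivCongr, emb, Equiv.Perm.subtypePerm]
  · push_neg at hlt
    by_cases hxm : (x:ℕ) < m
    · rw [F_mid i _ hlt hxm]
      have := hQ x hlt hxm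
      simp only []
      omega
    · have hx : x = Fin.last m := Fin.ext (by rw [Fin.val_last]; omega)
      subst hx
      rw [F_last, hi]

lemma not_Q_not_good {σ : Equiv.Perm (Fin (m+1))} (h : ¬ Qtail σ) :
    ∃ k : Fin (m+1), (k:ℕ) + 1 < (σ k : ℕ) := by
  by_contra hc
  push_neg at hc
  have hg : isGood σ := fun k => hc k
  apply h
  intro k h1 h2
  exact forced hg h1 h2

end good

section prodsplit
variable {R : Type*} [Ring R]

lemma revprod : ∀ (m : ℕ) (g : Fin (m+1) → R) (iv : ℕ) (hiv : iv ≤ m)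
    (hmid : ∀ x : Fin (m+1), iv ≤ (x:ℕ) → (x:ℕ) < m → g x = -1),
    (List.ofFn (fun k : Fin (m+1) => g k.rev)).prod
      = g (Fin.last m) * ((-1:R)^(m-iv) *
        (List.ofFn (fun k : Fin iv =>
          g ⟨((k.rev:Fin iv):ℕ), lt_of_lt_of_le (k.rev).isLt (by omega)⟩)).prod) := by
  intro m
  induction m with
  | zero =>
      intro g iv hiv hmid
      interval_cases iv
      simp [List.ofFn_succ]
  | succ m IH =>
      intro g iv hiv hmid
      rw [List.ofFn_succ]
      simp only [List.prod_cons, Fin.rev_zero]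
      have hpeel : (List.ofFn fun k : Fin (m+1) => g k.succ.rev)
          = List.ofFn (fun k : Fin (m+1) => (fun x : Fin (m+1) => g x.castSucc) k.rev) := by
        congr 1
        funext k
        rw [Fin.rev_succ]
      rcases eq_or_lt_of_le hiv with heq | hlt
      · -- iv = m+1 : no middle part
        subst heq
        rw [hpeel]
        simp only [Nat.sub_self, pow_zero, one_mul]
        congr 1
      · -- iv ≤ m
        have hiv' : iv ≤ m := by omega
        rw [hpeel, IH (fun x : Fin (m+1) => g x.castSucc) iv hiv'
          (fun x h1 h2 => hmid x.castSucc (by simpa using h1) (by simp; omega))]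
        have hlastval : (Fin.last m).castSucc = (⟨m, by omega⟩ : Fin (m+2)) := Fin.ext rfl
        rw [hlastval, hmid ⟨m, by omega⟩ (by simpa using hiv') (by simp)]
        have hre : (List.ofFn fun k : Fin iv =>
              (fun x : Fin (m+1) => g x.castSucc)
                ⟨((k.rev:Fin iv):ℕ), lt_of_lt_of_le (k.rev).isLt (by omega)⟩)
            = List.ofFn (fun k : Fin iv =>
              g ⟨((k.rev:Fin iv):ℕ), lt_of_lt_of_le (k.rev).isLt (by omega)⟩) := by
          congr 1
        rw [hre]
        have : m + 1 - iv = (m - iv) + 1 := by omega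
        rw [this, pow_succ']
        congr 1
        rw [mul_assoc]

end prodsplit

section key
variable {R : Type*} [Ring R] {m : ℕ}

lemma F_inj {i i' : Fin (m+1)} {τ : Equiv.Perm (Fin (i:ℕ))} {τ' : Equiv.Perm (Fin (i':ℕ))}
    (h : F i τ = F i' τ') : (⟨i, τ⟩ : Σ j : Fin (m+1), Equiv.Perm (Fin (j:ℕ))) = ⟨i', τ'⟩ := by
  have h1 : i = i' := by rw [← F_last i τ, ← F_last i' τ', h]
  subst h1
  have h2 : τ = τ' := by
    ext a
    have h3 := congrArg (fun σ : Equiv.Perm (Fin (m+1)) =>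
      ((σ ⟨(a:ℕ), a.isLt.trans i.isLt⟩ : Fin (m+1)) : ℕ)) h
    rw [F_lt i τ a.isLt, F_lt i τ' a.isLt] at h3
    simp only [Fin.eta] at h3
    exact h3
  rw [h2]

lemma term_eq_zero (N : Matrix (Fin (m+1)) (Fin (m+1)) R)
    (hlow : ∀ i j : Fin (m+1), (j:ℕ)+1 < (i:ℕ) → N i j = 0)
    {σ : Equiv.Perm (Fin (m+1))} (h : ¬ Qtail σ) :
    (Equiv.Perm.sign σ : ℤ) • (List.ofFn (fun k : Fin (m+1) => N (σ k.rev) k.rev)).prod = 0 := by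
  obtain ⟨k, hk⟩ := not_Q_not_good h
  have h0 : (0:R) ∈ List.ofFn (fun k : Fin (m+1) => N (σ k.rev) k.rev) := by
    rw [List.mem_ofFn]
    exact ⟨k.rev, by simp only [Fin.rev_rev]; exact hlow _ _ hk⟩
  rw [List.prod_eq_zero h0, smul_zero]

lemma key (N : Matrix (Fin (m+1)) (Fin (m+1)) R)
    (hlow : ∀ i j : Fin (m+1), (j:ℕ)+1 < (i:ℕ) → N i j = 0)
    (hsub : ∀ i j : Fin (m+1), (i:ℕ) = (j:ℕ)+1 → N i j = -1) :
    dR N = ∑ i : Fin (m+1), N i (Fin.last m) *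
      dR (lead N (i:ℕ) (by omega)) := by
  classical
  set term : Equiv.Perm (Fin (m+1)) → R := fun σ =>
    (Equiv.Perm.sign σ : ℤ) • (List.ofFn (fun k : Fin (m+1) => N (σ k.rev) k.rev)).prod
    with hterm
  have step1 : dR N = ∑ σ ∈ Finset.univ.filter Qtail, term σ := by
    rw [dR]
    exact (Finset.sum_filter_of_ne (fun σ _ hσ => by
      by_contra hQ
      exact hσ (term_eq_zero N hlow hQ))).symm
  have step2 : ∑ p : (Σ j : Fin (m+1), Equiv.Perm (Fin (j:ℕ))), term (F p.1 p.2)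
      = ∑ σ ∈ Finset.univ.filter Qtail, term σ := by
    apply Finset.sum_bij (fun p _ => F p.1 p.2)
    · intro p _
      rw [Finset.mem_filter]
      exact ⟨Finset.mem_univ _, Qtail_F p.1 p.2⟩
    · intro a _ b _ hab
      exact F_inj hab
    · intro σ hσ
      rw [Finset.mem_filter] at hσ
      obtain ⟨τ, hτ⟩ := Q_surj hσ.2
      exact ⟨⟨σ (Fin.last m), τ⟩, Finset.mem_univ _, hτ⟩
    · intro p _
      rfl
  rw [step1, ← step2]
  rw [← Finset.univ_sigma_univ, Finset.sum_sigma]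
  apply Finset.sum_congr rfl
  intro i _
  -- inner sum over τ
  have hiv : (i:ℕ) ≤ m := by omega
  have hle : (i:ℕ) ≤ m+1 := by omega
  have hprod : ∀ τ : Equiv.Perm (Fin (i:ℕ)),
      (List.ofFn (fun k : Fin (m+1) => N (F i τ k.rev) k.rev)).prod
      = N i (Fin.last m) * ((-1:R)^(m-(i:ℕ)) *
        (List.ofFn (fun k : Fin (i:ℕ) => lead N (i:ℕ) hle (τ k.rev) k.rev)).prod) := by
    intro τ
    have hmid : ∀ x : Fin (m+1), (i:ℕ) ≤ (x:ℕ) → (x:ℕ) < m →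
        (fun k : Fin (m+1) => N (F i τ k) k) x = -1 := by
      intro x h1 h2
      simp only []
      rw [F_mid i τ h1 h2]
      exact hsub _ _ (by simp)
    have hrp := revprod m (fun k : Fin (m+1) => N (F i τ k) k) (i:ℕ) hiv hmid
    rw [hrp, F_last]
    congr 2
    refine congrArg List.prod (congrArg List.ofFn ?_)
    funext k
    rw [F_lt i τ (k.rev).isLt]
    simp only [Fin.eta]
    rfl
  have hterm' : ∀ τ : Equiv.Perm (Fin (i:ℕ)), term (F i τ)
      = N i (Fin.last m) * ((Equiv.Perm.sign τ : ℤ) •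
        (List.ofFn (fun k : Fin (i:ℕ) => lead N (i:ℕ) hle (τ k.rev) k.rev)).prod) := by
    intro τ
    rw [hterm]
    simp only []
    rw [hprod τ]
    have hs : ((Equiv.Perm.sign (F i τ) : ℤˣ) : ℤ)
        = (-1)^(m-(i:ℕ)) * ((Equiv.Perm.sign τ : ℤˣ) : ℤ) := by
      rw [sign_F]; push_cast; ring
    rw [hs]
    set e := m - (i:ℕ)
    set a := N i (Fin.last m)
    set P := (List.ofFn (fun k : Fin (i:ℕ) => lead N (i:ℕ) hle (τ k.rev) k.rev)).prod
    set s := ((Equiv.Perm.sign τ : ℤˣ) : ℤ)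
    rw [zsmul_eq_mul, zsmul_eq_mul]
    have hc : ((-1:R)^e) = (((-1:ℤ)^e : ℤ) : R) := by push_cast; ring
    rw [hc, ← mul_assoc, (Int.cast_commute ((-1:ℤ)^e * s) a).eq, mul_assoc]
    congr 1
    rw [← mul_assoc, ← Int.cast_mul]
    have h1 : (-1:ℤ)^e * (-1)^e = 1 := by
      rw [← pow_add]; exact Even.neg_one_pow ⟨e, rfl⟩
    have h2 : ((-1:ℤ)^e * s) * (-1)^e = s := by
      calc ((-1:ℤ)^e * s) * (-1)^e = ((-1)^e * (-1)^e) * s := by ring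
        _ = s := by rw [h1, one_mul]
    rw [h2]
  calc ∑ τ : Equiv.Perm (Fin (i:ℕ)), term (F i τ)
      = ∑ τ : Equiv.Perm (Fin (i:ℕ)), N i (Fin.last m) * ((Equiv.Perm.sign τ : ℤ) •
        (List.ofFn (fun k : Fin (i:ℕ) => lead N (i:ℕ) hle (τ k.rev) k.rev)).prod) :=
        Finset.sum_congr rfl (fun τ _ => hterm' τ)
    _ = N i (Fin.last m) * dR (lead N (i:ℕ) (by omega)) := by
        rw [← Finset.mul_sum]; rfl

end key

section main
variable {R : Type*} [Ring R]

theorem main {n : ℕ} (M : Matrix (Fin (n+1)) (Fin (n+1)) R)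
    (hlow : ∀ i j : Fin (n+1), (j : ℕ) + 1 < (i : ℕ) → M i j = 0)
    (hsub : ∀ i j : Fin (n+1), (i : ℕ) = (j : ℕ) + 1 → M i j = -1)
    (P : ℕ → R) (hP0 : P 0 = 1)
    (hP : ∀ j : ℕ, (hj : j < n + 1) →
      P (j + 1) = ∑ i : Fin (j + 1),
        M ⟨i, lt_of_lt_of_le i.isLt (Nat.succ_le_of_lt hj)⟩ ⟨j, hj⟩ * P i) :
    P (n + 1) = detRight M := by
  have claim : ∀ j, ∀ (h : j ≤ n+1), P j = dR (lead M j h) := by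
    intro j
    induction j using Nat.strong_induction_on with
    | _ j IH =>
      match j with
      | 0 => intro h; rw [hP0, dR_zero]
      | (j+1) =>
        intro h
        have hj : j < n + 1 := by omega
        rw [hP j hj]
        set N := lead M (j+1) h with hN
        have hlowN : ∀ a b : Fin (j+1), (b:ℕ)+1 < (a:ℕ) → N a b = 0 :=
          fun a b hab => hlow _ _ hab
        have hsubN : ∀ a b : Fin (j+1), (a:ℕ) = (b:ℕ)+1 → N a b = -1 :=
          fun a b hab => hsub _ _ hab
        rw [key N hlowN hsubN]
        apply Finset.sum_congr rfl
        intro i _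
        have hlead : lead N (i:ℕ) (by omega) = lead M (i:ℕ) (by omega) := rfl
        rw [hlead, ← IH (i:ℕ) (by omega) (by omega)]
        rfl
  rw [claim (n+1) le_rfl]
  have : lead M (n+1) le_rfl = M := by
    funext a b
    simp [lead]
  rw [this]
  rfl

end main
end AT

/-- For an almost triangular matrix `M` (`M_{ij} = 0` for `i > j+1`, `M_{j+1,j} = -1`),
the recursion `P_0 = 1`, `P_{j+1} = Σ_{i=0}^{j} M_{ij} P_i` computes `det_right(M)`:
`P_{n+1} = det_right(M)`. -/
theorem stmt2 {R : Type*} [Ring R] {n : ℕ} (M : Matrix (Fin (n+1)) (Fin (n+1)) R)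
    (hlow : ∀ i j : Fin (n+1), (j : ℕ) + 1 < (i : ℕ) → M i j = 0)
    (hsub : ∀ i j : Fin (n+1), (i : ℕ) = (j : ℕ) + 1 → M i j = -1)
    (P : ℕ → R) (hP0 : P 0 = 1)
    (hP : ∀ j : ℕ, (hj : j < n + 1) →
      P (j + 1) = ∑ i : Fin (j + 1),
        M ⟨i, lt_of_lt_of_le i.isLt (Nat.succ_le_of_lt hj)⟩ ⟨j, hj⟩ * P i) :
    P (n + 1) = detRight M :=
  AT.main M hlow hsub P hP0 hP
end

section
/- Let M be an almost triangular matrix of size n+1 over an associative ring R. Define Q_0 = 1 and Q_{j+1} = Σ_{i=0}^{j} Q_i M_{n-j, n-i}. Then Q_{n+1} = det_right(M). -/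
open Equiv

/-- row inclusion skipping row 1 -/
def gmap (n : ℕ) : Fin (n+1) → Fin (n+2) := Fin.cases 0 (fun r => r.succ.succ)

lemma gmap_zero (n : ℕ) : gmap n 0 = 0 := rfl

lemma gmap_succ (n : ℕ) (r : Fin n) : gmap n r.succ = r.succ.succ := by
  simp [gmap]

lemma swap01_succ {n : ℕ} (x : Fin (n+1)) :
    Equiv.swap (0 : Fin (n+2)) 1 x.succ = gmap n x := by
  induction x using Fin.cases with
  | zero => simp [gmap]
  | succ y =>
    rw [gmap_succ]
    refine Equiv.swap_apply_of_ne_of_ne (Fin.succ_ne_zero _) ?_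
    rw [← Fin.succ_zero_eq_one]
    exact fun h => Fin.succ_ne_zero y (Fin.succ_injective _ h)

lemma prod_split {R : Type*} [Ring R] {n : ℕ} (M : Matrix (Fin (n+2)) (Fin (n+2)) R)
    (σ : Perm (Fin (n+2))) :
    (List.ofFn (fun k : Fin (n+2) => M (σ k.rev) k.rev)).prod
      = (List.ofFn (fun k : Fin (n+1) => M (σ k.rev.succ) k.rev.succ)).prod * M (σ 0) 0 := by
  rw [List.ofFn_succ', List.prod_concat]
  rw [Fin.rev_last]
  congr 2
  simp only [Fin.rev_castSucc]

lemma detRight_expand {R : Type*} [Ring R] {n : ℕ} (M : Matrix (Fin (n+2)) (Fin (n+2)) R)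
    (h1 : M 1 0 = -1) (h0 : ∀ i : Fin (n+2), 2 ≤ (i : ℕ) → M i 0 = 0) :
    detRight M = detRight (M.submatrix Fin.succ Fin.succ) * M 0 0
      + detRight (M.submatrix (gmap n) Fin.succ) := by
  rw [detRight]
  rw [← Equiv.sum_comp Equiv.Perm.decomposeFin.symm
    (fun σ : Perm (Fin (n+2)) =>
      (Equiv.Perm.sign σ : ℤ) • (List.ofFn (fun k : Fin (n+2) => M (σ k.rev) k.rev)).prod)]
  rw [Fintype.sum_prod_type]
  rw [Fin.sum_univ_succ]
  rw [Fin.sum_univ_succ]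
  have hzero : ∀ (p : Fin n) (e : Perm (Fin (n+1))),
      (Equiv.Perm.sign (Equiv.Perm.decomposeFin.symm (p.succ.succ, e)) : ℤ) •
        (List.ofFn (fun k : Fin (n+2) =>
          M (Equiv.Perm.decomposeFin.symm (p.succ.succ, e) k.rev) k.rev)).prod = 0 := by
    intro p e
    rw [prod_split, Equiv.Perm.decomposeFin_symm_apply_zero, h0 _ (by simp), mul_zero, smul_zero]
  rw [Finset.sum_eq_zero (fun p _ => Finset.sum_eq_zero (fun e _ => hzero p e)), add_zero]
  congr 1
  · -- p = 0 case
    rw [detRight, Finset.sum_mul]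
    refine Finset.sum_congr rfl fun e _ => ?_
    rw [prod_split, Equiv.Perm.decomposeFin_symm_apply_zero,
      Equiv.Perm.decomposeFin.symm_sign, if_pos rfl, one_mul]
    rw [smul_mul_assoc]
    have hk : ∀ k : Fin (n+1),
        M (Equiv.Perm.decomposeFin.symm ((0 : Fin (n+2)), e) k.rev.succ) k.rev.succ
          = M.submatrix Fin.succ Fin.succ (e k.rev) k.rev := fun k => by
      rw [Equiv.Perm.decomposeFin_symm_apply_succ, Equiv.swap_self, Equiv.refl_apply]
      rfl
    simp only [hk]
  · -- p = 1 case
    rw [detRight]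
    refine Finset.sum_congr rfl fun e _ => ?_
    rw [prod_split, Equiv.Perm.decomposeFin_symm_apply_zero,
      Equiv.Perm.decomposeFin.symm_sign, if_neg (by simp [Fin.ext_iff]), Fin.succ_zero_eq_one, h1, mul_neg_one]
    have : (((-1 : ℤˣ) * Equiv.Perm.sign e : ℤˣ) : ℤ) = -(Equiv.Perm.sign e : ℤ) := by
      push_cast; ring
    rw [this, neg_smul, smul_neg, neg_neg]
    have hk : ∀ k : Fin (n+1),
        M (Equiv.Perm.decomposeFin.symm ((1 : Fin (n+2)), e) k.rev.succ) k.rev.succ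
          = M.submatrix (gmap n) Fin.succ (e k.rev) k.rev := fun k => by
      rw [Equiv.Perm.decomposeFin_symm_apply_succ, swap01_succ]
      rfl
    simp only [hk]

lemma gmap_coe_succ {n : ℕ} (x : Fin (n+1)) (hx : x ≠ 0) :
    ((gmap n x : Fin (n+2)) : ℕ) = (x : ℕ) + 1 := by
  induction x using Fin.cases with
  | zero => exact absurd rfl hx
  | succ y => rw [gmap_succ]; simp

lemma aux_main : ∀ (n : ℕ) {R : Type*} [Ring R] (M : Matrix (Fin (n+1)) (Fin (n+1)) R),
    (∀ i j : Fin (n+1), (j : ℕ) + 1 < (i : ℕ) → M i j = 0) →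
    (∀ i j : Fin (n+1), (i : ℕ) = (j : ℕ) + 1 → M i j = -1) →
    ∀ (Q : ℕ → R), Q 0 = 1 →
    (∀ j : ℕ, j < n + 1 →
      Q (j + 1) = ∑ i : Fin (j + 1),
        Q i * M ⟨n - j, Nat.lt_succ_of_le (Nat.sub_le n j)⟩
                ⟨n - (i : ℕ), Nat.lt_succ_of_le (Nat.sub_le n i)⟩) →
    Q (n + 1) = detRight M := by
  intro n
  induction n with
  | zero =>
    intro R _ M hlow hsub Q hQ0 hQ
    have h1 := hQ 0 (by omega)
    rw [Fin.sum_univ_one] at h1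
    simp only [Fin.val_zero] at h1
    rw [hQ0, one_mul] at h1
    rw [detRight]
    have hu : (Finset.univ : Finset (Equiv.Perm (Fin (0+1)))) = {1} := by
      refine Finset.eq_singleton_iff_unique_mem.mpr
        ⟨Finset.mem_univ _, fun σ _ => Equiv.ext fun x => Fin.ext ?_⟩
      have h2 := x.isLt
      have h3 := (σ x).isLt
      omega
    rw [hu, Finset.sum_singleton]
    simp only [Equiv.Perm.sign_one, Units.val_one, one_smul, List.ofFn_succ, List.ofFn_zero,
      Equiv.Perm.one_apply, List.prod_cons, List.prod_nil, mul_one]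
    rw [h1]
    congr 1 <;> exact Fin.ext (by simp)
  | succ n IH =>
    intro R _ M hlow hsub Q hQ0 hQ
    set M' := M.submatrix Fin.succ Fin.succ with hM'
    set M'' := M.submatrix (gmap n) Fin.succ with hM''
    have hQ' : Q (n + 1) = detRight M' := by
      refine IH M' ?_ ?_ Q hQ0 ?_
      · intro i j h; exact hlow i.succ j.succ (by simpa using h)
      · intro i j h; exact hsub i.succ j.succ (by simpa using h)
      · intro j hj
        rw [hQ j (by omega)]
        refine Finset.sum_congr rfl fun i _ => ?_
        have hi := i.isLt
        rw [hM', Matrix.submatrix_apply]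
        congr 2 <;> exact Fin.ext (by simp only [Fin.val_succ]; omega)
    have hQ'' : (∑ i : Fin (n + 1), Q i *
        M 0 ⟨n + 1 - (i : ℕ), by omega⟩) = detRight M'' := by
      set Q'' : ℕ → R := fun j => if j ≤ n then Q j else
        ∑ i : Fin (n + 1), Q i * M 0 ⟨n + 1 - (i : ℕ), by omega⟩ with hQdef
      have key : Q'' (n + 1) = detRight M'' := by
        refine IH M'' ?_ ?_ Q'' ?_ ?_
        · intro i j h
          have hi : i ≠ 0 := by
            intro h0; rw [h0] at h; simp at h
          rw [hM'', Matrix.submatrix_apply]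
          refine hlow _ _ ?_
          rw [gmap_coe_succ i hi]
          simp only [Fin.val_succ]
          omega
        · intro i j h
          have hi : i ≠ 0 := by
            intro h0; rw [h0] at h; simp at h
          rw [hM'', Matrix.submatrix_apply]
          refine hsub _ _ ?_
          rw [gmap_coe_succ i hi]
          simp only [Fin.val_succ]
          omega
        · simp [hQdef, hQ0]
        · intro j hj
          rcases Nat.lt_or_ge j n with hjn | hjn
          · have e1 : Q'' (j + 1) = Q (j + 1) := by
              simp [hQdef, Nat.succ_le_of_lt hjn]
            rw [e1, hQ j (by omega)]
            refine Finset.sum_congr rfl fun i _ => ?_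
            have hi := i.isLt
            have e2 : Q'' (i : ℕ) = Q i := by
              simp only [hQdef, if_pos (show (i : ℕ) ≤ n by omega)]
            rw [e2, hM'', Matrix.submatrix_apply]
            have hnj : (⟨n - j, Nat.lt_succ_of_le (Nat.sub_le n j)⟩ : Fin (n+1)) ≠ 0 := by
              simp only [ne_eq, Fin.ext_iff, Fin.val_zero]
              omega
            congr 2
            · exact Fin.ext (by rw [gmap_coe_succ _ hnj]; simp only []; omega)
            · exact Fin.ext (by simp only [Fin.val_succ]; omega)
          · have hj' : j = n := by omega
            subst hj'
            have e1 : Q'' (j + 1) = ∑ i : Fin (j + 1), Q i *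
                M 0 ⟨j + 1 - (i : ℕ), by omega⟩ := by simp [hQdef]
            rw [e1]
            refine Finset.sum_congr rfl fun i _ => ?_
            have hi := i.isLt
            have e2 : Q'' (i : ℕ) = Q i := by
              simp only [hQdef, if_pos (show (i : ℕ) ≤ j by omega)]
            rw [e2, hM'', Matrix.submatrix_apply]
            have h0 : (⟨j - j, Nat.lt_succ_of_le (Nat.sub_le j j)⟩ : Fin (j+1)) = 0 :=
              Fin.ext (by simp)
            rw [h0, gmap_zero]
            congr 2
            exact Fin.ext (by simp only [Fin.val_succ]; omega)
      rw [← key]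
      simp [hQdef]
    have hexp := detRight_expand M
      (hsub 1 0 (by simp))
      (fun i hi => hlow i 0 (by simpa using (by omega : 1 < (i : ℕ))))
    rw [hQ (n + 1) (by omega), Fin.sum_univ_castSucc, hexp, ← hM', ← hM'', ← hQ', ← hQ'']
    rw [add_comm]
    congr 1
    · rw [Fin.val_last]
      congr 1
      congr 1 <;> exact Fin.ext (by simp)
    · refine Finset.sum_congr rfl fun i _ => ?_
      rw [Fin.coe_castSucc]
      congr 1
      congr 1 <;> exact Fin.ext (by simp)

/-- For an almost triangular matrix `M`, the recursion
`Q_0 = 1`, `Q_{j+1} = Σ_{i=0}^{j} Q_i M_{n-j,n-i}` satisfies `Q_{n+1} = det_right(M)`. -/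
theorem stmt3 {R : Type*} [Ring R] {n : ℕ} (M : Matrix (Fin (n+1)) (Fin (n+1)) R)
    (hlow : ∀ i j : Fin (n+1), (j : ℕ) + 1 < (i : ℕ) → M i j = 0)
    (hsub : ∀ i j : Fin (n+1), (i : ℕ) = (j : ℕ) + 1 → M i j = -1)
    (Q : ℕ → R) (hQ0 : Q 0 = 1)
    (hQ : ∀ j : ℕ, j < n + 1 →
      Q (j + 1) = ∑ i : Fin (j + 1),
        Q i * M ⟨n - j, Nat.lt_succ_of_le (Nat.sub_le n j)⟩
                ⟨n - (i : ℕ), Nat.lt_succ_of_le (Nat.sub_le n i)⟩) :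
    Q (n + 1) = detRight M := aux_main n M hlow hsub Q hQ0 hQ
end

section
/- Let M be an almost triangular matrix of size n+1 over an associative ring R. Then both inductive algorithms (the P-algorithm: P_0 = 1, P_{j+1} = Σ_{i=0}^j M_{ij} P_i; and the Q-algorithm: Q_0 = 1, Q_{j+1} = Σ_{i=0}^j Q_i M_{n-j,n-i}) yield the same value, which equals Σ M_{(i_k, i_{k+1}-1)} M_{(i_{k-1}, i_k - 1)} ⋯ M_{(i_0, i_1 - 1)}, summed over all sequences of integers 0 = i_0 < i_1 < ... < i_k < i_{k+1} = n+1. -/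
/-- Extension of a matrix on `Fin (n+1)` to `ℕ × ℕ`, by zero. -/
def Mext {R : Type*} [Ring R] {n : ℕ} (M : Matrix (Fin (n+1)) (Fin (n+1)) R)
    (i j : ℕ) : R :=
  if h : i < n + 1 ∧ j < n + 1 then M ⟨i, h.1⟩ ⟨j, h.2⟩ else 0

/-- For a sorted chain `[i_0, i_1, …, i_{k+1}]` the ordered product
`M_{(i_k, i_{k+1}-1)} M_{(i_{k-1}, i_k - 1)} ⋯ M_{(i_0, i_1 - 1)}`. -/
def chainProd {R : Type*} [Ring R] {n : ℕ} (M : Matrix (Fin (n+1)) (Fin (n+1)) R)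
    (l : List ℕ) : R :=
  (l.zip l.tail).foldl (fun acc pr => Mext M pr.1 (pr.2 - 1) * acc) 1

/-- Sum over all sequences `0 = i_0 < i_1 < … < i_k < i_{k+1} = n+1` (encoded by their
set `S` of intermediate values, a subset of `{1,…,n}`) of the ordered products
`M_{(i_k, i_{k+1}-1)} ⋯ M_{(i_0, i_1-1)}`. -/
def chainSum {R : Type*} [Ring R] {n : ℕ} (M : Matrix (Fin (n+1)) (Fin (n+1)) R) : R :=
  ∑ S ∈ (Finset.Icc 1 n).powerset,
    chainProd M ((insert 0 (insert (n + 1) S)).sort (· ≤ ·))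

namespace Stmt4Aux

open Finset

lemma sort_insert_bot (T : Finset ℕ) (s : ℕ) (h : ∀ x ∈ T, s < x) :
    (insert s T).sort (· ≤ ·) = s :: T.sort (· ≤ ·) :=
  Finset.sort_insert _ (fun b hb => (h b hb).le) (fun hm => lt_irrefl s (h s hm))

lemma sort_insert_top (T : Finset ℕ) (e : ℕ) (h : ∀ x ∈ T, x < e) :
    (insert e T).sort (· ≤ ·) = T.sort (· ≤ ·) ++ [e] := by
  have he : e ∉ T := fun hm => lt_irrefl e (h e hm)
  refine (fun hp hs => List.Perm.eq_of_pairwise' (r := (· ≤ · : ℕ → ℕ → Prop)) (Finset.pairwise_sort _ _) hs hp) ?_ ?_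
  · exact (Finset.sort_perm_toList _ _).trans ((Finset.toList_insert he).trans
      (((Finset.sort_perm_toList _ _).symm.cons e).trans
        (List.perm_append_singleton _ _).symm))
  · refine List.pairwise_append.mpr
      ⟨Finset.pairwise_sort _ _, List.pairwise_singleton _ e, fun a ha b hb => ?_⟩
    simp only [List.mem_singleton] at hb
    subst hb
    exact (h a ((Finset.mem_sort _).mp ha)).le

variable {R : Type*} [Ring R] {n : ℕ} (M : Matrix (Fin (n+1)) (Fin (n+1)) R)

@[simp] lemma chainProd_singleton (a : ℕ) : chainProd M [a] = 1 := rfl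

@[simp] lemma chainProd_pair (a b : ℕ) :
    chainProd M [a, b] = Mext M a (b - 1) * 1 := rfl

lemma foldl_shift (l : List (ℕ × ℕ)) (b : R) :
    l.foldl (fun acc pr => Mext M pr.1 (pr.2 - 1) * acc) b
      = l.foldl (fun acc pr => Mext M pr.1 (pr.2 - 1) * acc) 1 * b := by
  induction l generalizing b with
  | nil => simp
  | cons p l ih =>
    simp only [List.foldl_cons]
    rw [ih (Mext M p.1 (p.2 - 1) * b), ih (Mext M p.1 (p.2 - 1) * 1), mul_one, mul_assoc]

lemma chainProd_cons (s a : ℕ) (l : List ℕ) :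
    chainProd M (s :: a :: l) = chainProd M (a :: l) * Mext M s (a - 1) := by
  unfold chainProd
  simp only [List.tail_cons, List.zip_cons_cons, List.foldl_cons]
  rw [foldl_shift, mul_one]

lemma chainProd_append (l : List ℕ) (hl : l ≠ []) (e : ℕ) :
    chainProd M (l ++ [e]) = Mext M (l.getLast hl) (e - 1) * chainProd M l := by
  induction l with
  | nil => exact absurd rfl hl
  | cons a l ih =>
    cases l with
    | nil => simp
    | cons b l' =>
      have h' : (b :: l') ≠ [] := by simp
      have : (a :: b :: l') ++ [e] = a :: b :: (l' ++ [e]) := by simp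
      rw [this, chainProd_cons]
      have : (b :: (l' ++ [e])) = (b :: l') ++ [e] := by simp
      rw [this, ih h', chainProd_cons, List.getLast_cons h', mul_assoc]

lemma chainProd_snoc (l : List ℕ) (a e : ℕ) :
    chainProd M ((l ++ [a]) ++ [e]) = Mext M a (e - 1) * chainProd M (l ++ [a]) := by
  rw [chainProd_append M _ (by simp) e]
  congr 2
  exact List.getLast_append_singleton l

/-- Chain sums with right endpoint `i` (starting at `0`). -/
def F (i : ℕ) : R :=
  ∑ S ∈ (Finset.Ico 1 i).powerset,
    chainProd M ((insert 0 (insert i S)).sort (· ≤ ·))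

/-- Chain sums with left endpoint `s` (ending at `n+1`). -/
def G (s : ℕ) : R :=
  ∑ S ∈ (Finset.Icc (s+1) n).powerset,
    chainProd M ((insert s (insert (n+1) S)).sort (· ≤ ·))

lemma F_zero : F M 0 = 1 := by
  rw [F]
  have h : Finset.Ico 1 0 = ∅ := by simp
  rw [h, Finset.powerset_empty, Finset.sum_singleton]
  simp

lemma G_top : G M (n+1) = 1 := by
  rw [G]
  have h : Finset.Icc (n+1+1) n = ∅ := Finset.Icc_eq_empty (by omega)
  rw [h, Finset.powerset_empty, Finset.sum_singleton]
  simp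

lemma Mext_eq (i j : ℕ) (h1 : i < n + 1) (h2 : j < n + 1) :
    Mext M i j = M ⟨i, h1⟩ ⟨j, h2⟩ := by
  rw [Mext, dif_pos ⟨h1, h2⟩]

lemma sumL : ∀ m e : ℕ, m < e →
    ∑ S ∈ (Finset.Icc 1 m).powerset,
        chainProd M ((insert 0 (insert e S)).sort (· ≤ ·))
      = ∑ i ∈ Finset.range (m+1), Mext M i (e-1) * F M i := by
  intro m
  induction m with
  | zero =>
    intro e he
    have h : Finset.Icc 1 0 = ∅ := by simp
    rw [h, Finset.powerset_empty, Finset.sum_singleton, Finset.sum_range_one, F_zero]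
    have h2 : (insert 0 (insert e (∅ : Finset ℕ))).sort (· ≤ ·) = [0, e] := by
      rw [show (insert e (∅ : Finset ℕ)) = {e} by simp,
        sort_insert_bot _ 0 (by simp; omega), Finset.sort_singleton]
    rw [h2, chainProd_pair]
  | succ m ih =>
    intro e he
    have hme : m < e := by omega
    have hIcc : Finset.Icc 1 (m+1) = insert (m+1) (Finset.Icc 1 m) := by
      ext x; simp [Finset.mem_Icc]; omega
    have hnotmem : (m+1) ∉ Finset.Icc 1 m := by simp
    rw [hIcc, Finset.sum_powerset_insert hnotmem, ih e hme,
      Finset.sum_range_succ (fun i => Mext M i (e-1) * F M i) (m+1)]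
    congr 1
    rw [F]
    have hIco : Finset.Ico 1 (m+1) = Finset.Icc 1 m := by
      ext x; simp [Finset.mem_Icc, Finset.mem_Ico]
    rw [hIco, Finset.mul_sum]
    refine Finset.sum_congr rfl (fun S hS => ?_)
    have hSm : ∀ x ∈ S, 1 ≤ x ∧ x ≤ m := fun x hx => by
      have := Finset.mem_powerset.mp hS hx
      simpa [Finset.mem_Icc] using this
    have hset1 : insert 0 (insert e (insert (m+1) S))
        = insert e (insert (m+1) (insert 0 S)) := by
      ext x; simp; tauto
    have hset2 : insert 0 (insert (m+1) S) = insert (m+1) (insert 0 S) := by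
      ext x; simp; tauto
    have hsort1 : (insert e (insert (m+1) (insert 0 S))).sort (· ≤ ·)
        = (insert (m+1) (insert 0 S)).sort (· ≤ ·) ++ [e] := by
      refine sort_insert_top _ e (fun x hx => ?_)
      simp only [Finset.mem_insert] at hx
      rcases hx with h | h | h
      · omega
      · omega
      · have := hSm x h; omega
    have hsort2 : (insert (m+1) (insert 0 S)).sort (· ≤ ·)
        = (insert 0 S).sort (· ≤ ·) ++ [m+1] := by
      refine sort_insert_top _ (m+1) (fun x hx => ?_)
      simp only [Finset.mem_insert] at hx
      rcases hx with h | h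
      · omega
      · have := hSm x h; omega
    rw [hset1, hsort1, hsort2, chainProd_snoc, hset2, hsort2]

lemma sumK : ∀ k u s : ℕ, u + k = n + 1 → s < u →
    ∑ S ∈ (Finset.Icc u n).powerset,
        chainProd M ((insert s (insert (n+1) S)).sort (· ≤ ·))
      = ∑ t ∈ Finset.Icc u (n+1), G M t * Mext M s (t-1) := by
  intro k
  induction k with
  | zero =>
    intro u s hu hs
    have hun : u = n + 1 := by omega
    subst hun
    have h1 : Finset.Icc (n+1) n = ∅ := Finset.Icc_eq_empty (by omega)
    have h2 : Finset.Icc (n+1) (n+1) = {n+1} := Finset.Icc_self _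
    rw [h1, Finset.powerset_empty, Finset.sum_singleton, h2, Finset.sum_singleton, G_top]
    have h3 : (insert s (insert (n+1) (∅ : Finset ℕ))).sort (· ≤ ·) = [s, n+1] := by
      rw [show (insert (n+1) (∅ : Finset ℕ)) = {n+1} by simp,
        sort_insert_bot _ s (by simp; omega), Finset.sort_singleton]
    rw [h3, chainProd_pair, one_mul, mul_one]
  | succ k ih =>
    intro u s hu hs
    have hun : u ≤ n := by omega
    have hIcc : Finset.Icc u n = insert u (Finset.Icc (u+1) n) := by
      ext x; simp [Finset.mem_Icc]; omega
    have hnm : u ∉ Finset.Icc (u+1) n := by simp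
    rw [hIcc, Finset.sum_powerset_insert hnm, ih (u+1) s (by omega) (by omega)]
    have hIcc2 : Finset.Icc u (n+1) = insert u (Finset.Icc (u+1) (n+1)) := by
      ext x; simp [Finset.mem_Icc]; omega
    rw [hIcc2, Finset.sum_insert (by simp), add_comm]
    congr 1
    rw [G, Finset.sum_mul]
    refine Finset.sum_congr rfl (fun S hS => ?_)
    have hSm : ∀ x ∈ S, u + 1 ≤ x ∧ x ≤ n := fun x hx => by
      have := Finset.mem_powerset.mp hS hx
      simpa [Finset.mem_Icc] using this
    have hset : insert s (insert (n+1) (insert u S))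
        = insert s (insert u (insert (n+1) S)) := by
      ext x; simp; tauto
    have hsort2 : (insert u (insert (n+1) S)).sort (· ≤ ·)
        = u :: (insert (n+1) S).sort (· ≤ ·) := by
      refine sort_insert_bot _ u (fun x hx => ?_)
      simp only [Finset.mem_insert] at hx
      rcases hx with h | h
      · omega
      · have := hSm x h; omega
    have hsort1 : (insert s (insert u (insert (n+1) S))).sort (· ≤ ·)
        = s :: (insert u (insert (n+1) S)).sort (· ≤ ·) := by
      refine sort_insert_bot _ s (fun x hx => ?_)
      simp only [Finset.mem_insert] at hx
      rcases hx with h | h | h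
      · omega
      · omega
      · have := hSm x h; omega
    rw [hset, hsort1, hsort2, chainProd_cons]

lemma F_top : F M (n+1) = chainSum M := by
  rw [F, chainSum, Finset.Ico_add_one_right_eq_Icc]

lemma G_bot : G M 0 = chainSum M := by
  rw [G, chainSum]

end Stmt4Aux

open Stmt4Aux in
/-- For an almost triangular matrix `M`, both the `P`-algorithm and the `Q`-algorithm give
the same value, namely the sum over all sequences `0 = i_0 < … < i_{k+1} = n+1` of
`M_{(i_k, i_{k+1}-1)} M_{(i_{k-1}, i_k - 1)} ⋯ M_{(i_0, i_1 - 1)}`. -/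
theorem stmt4 {R : Type*} [Ring R] {n : ℕ} (M : Matrix (Fin (n+1)) (Fin (n+1)) R)
    (hlow : ∀ i j : Fin (n+1), (j : ℕ) + 1 < (i : ℕ) → M i j = 0)
    (hsub : ∀ i j : Fin (n+1), (i : ℕ) = (j : ℕ) + 1 → M i j = -1)
    (P Q : ℕ → R) (hP0 : P 0 = 1)
    (hP : ∀ j : ℕ, (hj : j < n + 1) →
      P (j + 1) = ∑ i : Fin (j + 1),
        M ⟨i, lt_of_lt_of_le i.isLt (Nat.succ_le_of_lt hj)⟩ ⟨j, hj⟩ * P i)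
    (hQ0 : Q 0 = 1)
    (hQ : ∀ j : ℕ, j < n + 1 →
      Q (j + 1) = ∑ i : Fin (j + 1),
        Q i * M ⟨n - j, Nat.lt_succ_of_le (Nat.sub_le n j)⟩
                ⟨n - (i : ℕ), Nat.lt_succ_of_le (Nat.sub_le n i)⟩) :
    P (n + 1) = Q (n + 1) ∧ P (n + 1) = chainSum M := by
  -- P side
  have hPF : ∀ j, j ≤ n + 1 → P j = F M j := by
    intro j
    induction j using Nat.strong_induction_on with
    | _ j ihj =>
      match j with
      | 0 => intro _; rw [hP0, F_zero]
      | (k+1) =>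
        intro hk1
        have hk : k < n + 1 := by omega
        rw [hP k hk]
        have hterm : ∀ i : Fin (k+1),
            M ⟨(i : ℕ), lt_of_lt_of_le i.isLt (Nat.succ_le_of_lt hk)⟩ ⟨k, hk⟩ * P i
              = Mext M (i : ℕ) k * F M (i : ℕ) := by
          intro i
          rw [Mext_eq M (i : ℕ) k (lt_of_lt_of_le i.isLt (Nat.succ_le_of_lt hk)) hk,
            ihj (i : ℕ) (by omega) (by omega)]
        rw [Finset.sum_congr rfl (fun i _ => hterm i),
          Fin.sum_univ_eq_sum_range (fun i => Mext M i k * F M i) (k+1)]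
        have hL := sumL M k (k+1) (Nat.lt_succ_self k)
        have hk1' : k + 1 - 1 = k := rfl
        rw [hk1'] at hL
        rw [← hL, F]
        have hIco : Finset.Ico 1 (k+1) = Finset.Icc 1 k := by
          ext x; simp [Finset.mem_Icc, Finset.mem_Ico]
        rw [hIco]
  -- Q side
  have hQG : ∀ m, m ≤ n + 1 → Q m = G M (n + 1 - m) := by
    intro m
    induction m using Nat.strong_induction_on with
    | _ m ihm =>
      match m with
      | 0 =>
        intro _
        have : n + 1 - 0 = n + 1 := rfl
        rw [hQ0, this, G_top]
      | (j+1) =>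
        intro hj1
        have hj : j < n + 1 := by omega
        rw [hQ j hj]
        have hsub1 : n + 1 - (j + 1) = n - j := by omega
        rw [hsub1]
        have hK := sumK M j (n - j + 1) (n - j) (by omega) (by omega)
        have hG : G M (n - j) = ∑ t ∈ Finset.Icc (n - j + 1) (n+1), G M t * Mext M (n - j) (t-1) := by
          rw [G]; exact hK
        rw [hG]
        have hterm : ∀ i : Fin (j+1),
            Q (i : ℕ) * M ⟨n - j, Nat.lt_succ_of_le (Nat.sub_le n j)⟩
                ⟨n - (i : ℕ), Nat.lt_succ_of_le (Nat.sub_le n (i : ℕ))⟩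
              = G M (n + 1 - (i : ℕ)) * Mext M (n - j) (n - (i : ℕ)) := by
          intro i
          rw [Mext_eq M (n - j) (n - (i : ℕ)) (Nat.lt_succ_of_le (Nat.sub_le n j))
              (Nat.lt_succ_of_le (Nat.sub_le n (i : ℕ))),
            ihm (i : ℕ) (by omega) (by omega)]
        rw [Finset.sum_congr rfl (fun i _ => hterm i),
          Fin.sum_univ_eq_sum_range (fun i => G M (n + 1 - i) * Mext M (n - j) (n - i)) (j+1)]
        refine Finset.sum_nbij' (fun i => n + 1 - i) (fun t => n + 1 - t) ?_ ?_ ?_ ?_ ?_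
        · intro a ha; simp only [Finset.mem_range] at ha; simp [Finset.mem_Icc]; omega
        · intro a ha; simp only [Finset.mem_Icc] at ha; simp [Finset.mem_range]; omega
        · intro a ha; simp only [Finset.mem_range] at ha
          show n + 1 - (n + 1 - a) = a; omega
        · intro a ha; simp only [Finset.mem_Icc] at ha
          show n + 1 - (n + 1 - a) = a; omega
        · intro a ha
          simp only [Finset.mem_range] at ha
          have h1 : n + 1 - a - 1 = n - a := by omega
          show G M (n + 1 - a) * Mext M (n - j) (n - a)
            = G M (n + 1 - a) * Mext M (n - j) (n + 1 - a - 1)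
          rw [h1]
  have hP' : P (n + 1) = chainSum M := by
    rw [hPF (n+1) le_rfl, F_top]
  have hQ' : Q (n + 1) = chainSum M := by
    rw [hQG (n+1) le_rfl]
    have : n + 1 - (n + 1) = 0 := by omega
    rw [this, G_bot]
  exact ⟨hP'.trans hQ'.symm, hP'⟩
end

section
/- Let R be an associative ring with an anti-involution ∨ (additive, with (xy)^∨ = y^∨ x^∨), and let M be an almost triangular matrix over R. Then (det_right(M))^∨ = det_right(M^{τ∨}), where M^{τ∨} is obtained from M by transposing along the anti-diagonal and applying ∨ entrywise. -/
private lemma perm_apply_inv_self {α : Type*} (f : Equiv.Perm α) (x : α) : f (f⁻¹ x) = x :=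
  f.apply_symm_apply x

private lemma perm_inv_apply_self {α : Type*} (f : Equiv.Perm α) (x : α) : f⁻¹ (f x) = x :=
  f.symm_apply_apply x

private lemma listOfFn_eq_rangeMap {R : Type*} {m : ℕ} (b : Fin m → R) (g : ℕ → R)
    (h : ∀ i : Fin m, g i = b i) :
    List.ofFn b = (List.range m).map g := by
  apply List.ext_getElem
  · simp
  · intro i h1 h2
    simp only [List.getElem_ofFn, List.getElem_map, List.getElem_range]
    exact (h ⟨i, by simpa using h1⟩).symm

private lemma range_map_prod_split {R : Type*} [Ring R] (g : ℕ → R) (a m : ℕ) (h : a ≤ m) :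
    ((List.range m).map g).prod
      = ((List.range a).map g).prod * ((List.range (m - a)).map (fun i => g (a + i))).prod := by
  conv_lhs => rw [show m = a + (m - a) by omega]
  rw [List.range_add, List.map_append, List.prod_append, List.map_map]
  rfl

private lemma range_map_prod_const {R : Type*} [Ring R] (c : R) :
    ∀ (k : ℕ) (h : ℕ → R), (∀ i, i < k → h i = c) → ((List.range k).map h).prod = c ^ k
  | 0, h, _ => by simp
  | (k+1), h, hh => by
    rw [List.range_succ, List.map_append, List.prod_append,
      range_map_prod_const c k h (fun i hi => hh i (by omega))]
    simp [hh k (by omega), pow_succ]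

private lemma key {R : Type*} [Ring R] :
    ∀ (m : ℕ) (σ : Equiv.Perm (Fin m)) (b : Fin m → R),
      (∀ k : Fin m, ((σ k : Fin m) : ℕ) ≤ (k : ℕ) + 1) →
      (∀ i : Fin m, ((σ i : Fin m) : ℕ) = (i : ℕ) + 1 → b i = -1) →
      (List.ofFn b).prod = (List.ofFn fun i => b (σ⁻¹ i)).prod := by
  intro m
  induction m using Nat.strong_induction_on with
  | _ m IH =>
    intro σ b hσ hc
    cases m with
    | zero => simp
    | succ n =>
      set A : ℕ := ((σ (Fin.last n) : Fin (n+1)) : ℕ) with hA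
      have hAn : A ≤ n := Nat.lt_succ_iff.mp (σ (Fin.last n)).isLt
      have hbase : ∀ j : Fin (n+1), A < (j : ℕ) →
          (j : ℕ) ≤ ((σ⁻¹ j : Fin (n+1)) : ℕ) + 1 ∧ ((σ⁻¹ j : Fin (n+1)) : ℕ) < n := by
        intro j hAj
        constructor
        · have h1 := hσ (σ⁻¹ j)
          rwa [perm_apply_inv_self] at h1
        · have h2 : ((σ⁻¹ j : Fin (n+1)) : ℕ) ≤ n := Nat.lt_succ_iff.mp (σ⁻¹ j).isLt
          rcases h2.lt_or_eq with h | h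
          · exact h
          · exfalso
            have he : σ⁻¹ j = Fin.last n := Fin.ext h
            have hj' : σ (Fin.last n) = j := by rw [← he, perm_apply_inv_self]
            rw [hj'] at hA
            omega
      have G : ∀ d : ℕ, ∀ j : Fin (n+1), n - d ≤ (j : ℕ) → A < (j : ℕ) →
          ((σ⁻¹ j : Fin (n+1)) : ℕ) = (j : ℕ) - 1 := by
        intro d
        induction d with
        | zero =>
          intro j hj hAj
          obtain ⟨h1, h2⟩ := hbase j hAj
          have hjn : (j : ℕ) ≤ n := Nat.lt_succ_iff.mp j.isLt
          omega
        | succ d IHd =>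
          intro j hj hAj
          obtain ⟨h1, h2⟩ := hbase j hAj
          by_cases hcase : ((σ⁻¹ j : Fin (n+1)) : ℕ) = (j : ℕ) - 1
          · exact hcase
          · exfalso
            have htj : (j : ℕ) ≤ ((σ⁻¹ j : Fin (n+1)) : ℕ) := by omega
            set t : ℕ := ((σ⁻¹ j : Fin (n+1)) : ℕ) with ht
            have hj' : ((σ⁻¹ (⟨t+1, by omega⟩ : Fin (n+1)) : Fin (n+1)) : ℕ) = t := by
              rw [IHd ⟨t+1, by omega⟩ (by simp <;> omega) (by simp <;> omega)]
              simp
            have heq : σ⁻¹ (⟨t+1, by omega⟩ : Fin (n+1)) = σ⁻¹ j := Fin.ext (by rw [hj', ht])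
            have := σ⁻¹.injective heq
            have : t + 1 = (j : ℕ) := congrArg Fin.val this
            omega
      have F1 : ∀ k : Fin (n+1), A ≤ (k : ℕ) → (k : ℕ) < n →
          ((σ k : Fin (n+1)) : ℕ) = (k : ℕ) + 1 := by
        intro k h1 h2
        have hg := G n ⟨(k : ℕ)+1, by omega⟩ (by simp) (by simp <;> omega)
        have he : σ⁻¹ (⟨(k : ℕ)+1, by omega⟩ : Fin (n+1)) = k := Fin.ext (by simpa using hg)
        have := congrArg σ he
        rw [perm_apply_inv_self] at this
        rw [← this]
      have F2a : ∀ j : Fin (n+1), (j : ℕ) < A → ((σ⁻¹ j : Fin (n+1)) : ℕ) < A := by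
        intro j hj
        by_contra hge
        push_neg at hge
        have h2 : ((σ⁻¹ j : Fin (n+1)) : ℕ) ≤ n := Nat.lt_succ_iff.mp (σ⁻¹ j).isLt
        rcases h2.lt_or_eq with h | h
        · have := F1 (σ⁻¹ j) hge h
          rw [perm_apply_inv_self] at this
          omega
        · have he : σ⁻¹ j = Fin.last n := Fin.ext h
          have hj' : σ (Fin.last n) = j := by rw [← he, perm_apply_inv_self]
          rw [hj'] at hA
          omega
      have F2b : ∀ i : Fin (n+1), (i : ℕ) < A → ((σ i : Fin (n+1)) : ℕ) < A := by
        intro i hi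
        by_contra hge
        push_neg at hge
        rcases hge.lt_or_eq with h | h
        · have hg := G n (σ i) (by omega) h
          rw [perm_inv_apply_self] at hg
          omega
        · have he : σ i = σ (Fin.last n) := Fin.ext (by omega)
          have := σ.injective he
          have hv : (i : ℕ) = n := by rw [this]; rfl
          omega
      -- the restricted permutation on [0, A)
      have hAm : A < n + 1 := by omega
      set emb : Fin A → Fin (n+1) := fun i => ⟨(i : ℕ), by omega⟩ with hemb
      set σ' : Equiv.Perm (Fin A) :=
        { toFun := fun i => ⟨((σ (emb i) : Fin (n+1)) : ℕ), F2b (emb i) i.isLt⟩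
          invFun := fun j => ⟨((σ⁻¹ (emb j) : Fin (n+1)) : ℕ), F2a (emb j) j.isLt⟩
          left_inv := by
            intro i
            apply Fin.ext
            show ((σ⁻¹ (emb ⟨((σ (emb i) : Fin (n+1)) : ℕ), _⟩) : Fin (n+1)) : ℕ) = (i : ℕ)
            have : emb (⟨((σ (emb i) : Fin (n+1)) : ℕ), F2b (emb i) i.isLt⟩ : Fin A)
                = σ (emb i) := Fin.ext rfl
            rw [this, perm_inv_apply_self]
          right_inv := by
            intro j
            apply Fin.ext
            show ((σ (emb ⟨((σ⁻¹ (emb j) : Fin (n+1)) : ℕ), _⟩) : Fin (n+1)) : ℕ) = (j : ℕ)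
            have : emb (⟨((σ⁻¹ (emb j) : Fin (n+1)) : ℕ), F2a (emb j) j.isLt⟩ : Fin A)
                = σ⁻¹ (emb j) := Fin.ext rfl
            rw [this, perm_apply_inv_self] } with hσ'def
      set b' : Fin A → R := fun i => b (emb i) with hb'
      have hIH := IH A hAm σ' b' (fun k => hσ (emb k)) (fun i hi => hc (emb i) hi)
      -- the extended entry functions
      set gL : ℕ → R := fun i => if h : i < n+1 then b ⟨i, h⟩ else 1 with hgL
      set gR : ℕ → R := fun i => if h : i < n+1 then b (σ⁻¹ (⟨i, h⟩ : Fin (n+1))) else 1 with hgR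
      have hσ'inv : ∀ i : Fin A, (σ'⁻¹ i : Fin A)
          = ⟨((σ⁻¹ (emb i) : Fin (n+1)) : ℕ), F2a (emb i) i.isLt⟩ := fun i => rfl
      -- pointwise values
      have hgLlow : ∀ i : Fin A, gL (i : ℕ) = b' i := by
        intro i
        show (if h : (i : ℕ) < n + 1 then b ⟨(i : ℕ), h⟩ else 1) = b' i
        rw [dif_pos (show (i : ℕ) < n + 1 by omega)]
      have hgRlow : ∀ i : Fin A, gR (i : ℕ) = b' (σ'⁻¹ i) := by
        intro i
        show (if h : (i : ℕ) < n + 1 then b (σ⁻¹ (⟨(i : ℕ), h⟩ : Fin (n+1))) else 1)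
            = b' (σ'⁻¹ i)
        rw [dif_pos (show (i : ℕ) < n + 1 by omega)]
        rfl
      have hgLmid : ∀ i : ℕ, i < n - A → gL (A + i) = -1 := by
        intro i hi
        show (if h : A + i < n + 1 then b ⟨A + i, h⟩ else 1) = -1
        rw [dif_pos (show A + i < n + 1 by omega)]
        exact hc ⟨A + i, by omega⟩ (F1 ⟨A + i, by omega⟩ (by simp) (by simp <;> omega))
      have hgLtop : gL n = b (Fin.last n) := by
        show (if h : n < n + 1 then b ⟨n, h⟩ else 1) = b (Fin.last n)
        rw [dif_pos (show n < n + 1 by omega)]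
        rfl
      have hσlastA : σ (Fin.last n) = (⟨A, by omega⟩ : Fin (n+1)) := Fin.ext (by simp [hA])
      have hgRA : gR A = b (Fin.last n) := by
        show (if h : A < n + 1 then b (σ⁻¹ (⟨A, h⟩ : Fin (n+1))) else 1) = b (Fin.last n)
        rw [dif_pos (show A < n + 1 by omega)]
        rw [show (⟨A, show A < n + 1 by omega⟩ : Fin (n+1)) = σ (Fin.last n) from hσlastA.symm,
          perm_inv_apply_self]
      have hgRmid : ∀ i : ℕ, i < n - A → gR (A + (i + 1)) = -1 := by
        intro i hi
        show (if h : A + (i + 1) < n + 1 then b (σ⁻¹ (⟨A + (i + 1), h⟩ : Fin (n+1))) else 1) = -1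
        rw [dif_pos (show A + (i + 1) < n + 1 by omega)]
        have hg := G n (⟨A + (i+1), by omega⟩ : Fin (n+1)) (by simp) (by simp <;> omega)
        have he : σ⁻¹ (⟨A + (i+1), by omega⟩ : Fin (n+1)) = ⟨A + i, by omega⟩ :=
          Fin.ext (by simp at hg ⊢ <;> omega)
        rw [he]
        exact hc ⟨A + i, by omega⟩ (F1 ⟨A + i, by omega⟩ (by simp) (by simp <;> omega))
      -- assemble the products
      have eL : (List.ofFn b).prod = ((List.range (n+1)).map gL).prod := by
        rw [listOfFn_eq_rangeMap b gL (fun i => by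
          show (if h : (i : ℕ) < n + 1 then b ⟨(i : ℕ), h⟩ else 1) = b i
          rw [dif_pos i.isLt])]
      have eR : (List.ofFn fun i => b (σ⁻¹ i)).prod = ((List.range (n+1)).map gR).prod := by
        rw [listOfFn_eq_rangeMap (fun i => b (σ⁻¹ i)) gR (fun i => by
          show (if h : (i : ℕ) < n + 1 then b (σ⁻¹ (⟨(i : ℕ), h⟩ : Fin (n+1))) else 1)
              = b (σ⁻¹ i)
          rw [dif_pos i.isLt])]
      have ePL : ((List.range A).map gL).prod = (List.ofFn b').prod := by
        rw [listOfFn_eq_rangeMap b' gL hgLlow]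
      have ePR : ((List.range A).map gR).prod = (List.ofFn fun i => b' (σ'⁻¹ i)).prod := by
        rw [listOfFn_eq_rangeMap (fun i => b' (σ'⁻¹ i)) gR hgRlow]
      have tailL : ((List.range (n + 1 - A)).map (fun i => gL (A + i))).prod
          = (-1 : R) ^ (n - A) * b (Fin.last n) := by
        rw [show n + 1 - A = (n - A) + 1 by omega, List.range_succ, List.map_append,
          List.prod_append, range_map_prod_const (-1 : R) (n - A) _ hgLmid]
        simp only [List.map_cons, List.map_nil, List.prod_cons, List.prod_nil, mul_one]
        rw [show A + (n - A) = n by omega, hgLtop]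
      have tailR : ((List.range (n + 1 - A)).map (fun i => gR (A + i))).prod
          = b (Fin.last n) * (-1 : R) ^ (n - A) := by
        rw [show n + 1 - A = (n - A) + 1 by omega, List.range_succ_eq_map,
          List.map_cons, List.prod_cons, List.map_map]
        rw [show ((fun i => gR (A + i)) ∘ Nat.succ) = (fun i => gR (A + (i + 1))) from
          funext (fun i => by simp [Nat.succ_eq_add_one])]
        rw [range_map_prod_const (-1 : R) (n - A) _ hgRmid,
          show A + 0 = A from rfl, hgRA]
      rw [eL, eR, range_map_prod_split gL A (n+1) (by omega),
        range_map_prod_split gR A (n+1) (by omega), tailL, tailR, ePL, ePR, ← hIH,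
        ← mul_assoc, mul_assoc _ _ (b (Fin.last n)),
        ((Commute.neg_one_left (b (Fin.last n))).pow_left (n - A)).eq, ← mul_assoc]

/-- For an anti-involution `V` of `R` (additive, unital, anti-multiplicative) and an
almost triangular matrix `M`, one has `(det_right M)^∨ = det_right (M^{τ∨})`, where
`(M^{τ∨})_{ij} = (M_{n-j,n-i})^∨`. -/
theorem stmt6 {R : Type*} [Ring R] {n : ℕ} (V : R → R)
    (hadd : ∀ x y, V (x + y) = V x + V y)
    (hmul : ∀ x y, V (x * y) = V y * V x)
    (hone : V 1 = 1)
    (M : Matrix (Fin (n+1)) (Fin (n+1)) R)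
    (hlow : ∀ i j : Fin (n+1), (j : ℕ) + 1 < (i : ℕ) → M i j = 0)
    (hsub : ∀ i j : Fin (n+1), (i : ℕ) = (j : ℕ) + 1 → M i j = -1) :
    V (detRight M) = detRight (Matrix.of fun i j => V (M (Fin.rev j) (Fin.rev i))) := by
  classical
  set φ : R →+ R := AddMonoidHom.mk' V hadd with hφdef
  have hφ : ∀ x, φ x = V x := fun _ => rfl
  have hV0 : V 0 = 0 := map_zero φ
  have hVneg1 : V (-1) = -1 := by
    have := map_neg φ 1
    rw [hφ, hφ, hone] at this
    exact this
  -- V of a list product is the product of V over the reversed list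
  have hVprod : ∀ l : List R, V l.prod = (l.reverse.map V).prod := by
    intro l
    induction l with
    | nil => simpa using hone
    | cons a t ih =>
      rw [List.prod_cons, hmul, ih, List.reverse_cons, List.map_append, List.prod_append]
      simp
  -- reversing an ofFn list
  have hofRev : ∀ (g : Fin (n+1) → R), (List.ofFn g).reverse = List.ofFn (fun i => g i.rev) := by
    intro g
    apply List.ext_getElem
    · simp
    · intro i h1 h2
      simp only [List.getElem_reverse, List.getElem_ofFn, List.length_reverse,
        List.length_ofFn] at *
      congr 1
      apply Fin.ext
      simp [Fin.val_rev]
  -- the reindexing bijection on permutations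
  set f : Equiv.Perm (Fin (n+1)) → Equiv.Perm (Fin (n+1)) :=
    fun σ => Fin.revPerm * σ⁻¹ * Fin.revPerm with hfdef
  have hinv : (Fin.revPerm : Equiv.Perm (Fin (n+1)))⁻¹ = Fin.revPerm := by
    rw [Equiv.Perm.inv_def, Fin.revPerm_symm]
  have hsq : (Fin.revPerm : Equiv.Perm (Fin (n+1))) * Fin.revPerm = 1 := by
    conv_lhs => rw [← hinv]
    exact inv_mul_cancel _
  have hff : Function.Involutive f := by
    intro σ
    show Fin.revPerm * (Fin.revPerm * σ⁻¹ * Fin.revPerm)⁻¹ * Fin.revPerm = σ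
    rw [mul_inv_rev, mul_inv_rev, hinv, inv_inv]
    calc Fin.revPerm * (Fin.revPerm * (σ * Fin.revPerm)) * Fin.revPerm
        = (Fin.revPerm * Fin.revPerm) * σ * (Fin.revPerm * Fin.revPerm) := by
          simp only [mul_assoc]
      _ = σ := by rw [hsq, one_mul, mul_one]
  have hsign : ∀ σ : Equiv.Perm (Fin (n+1)),
      Equiv.Perm.sign (f σ) = Equiv.Perm.sign σ := by
    intro σ
    have huvu : ∀ (u v : ℤˣ), u * v * u = v := by
      intro u v
      rw [mul_comm u v, mul_assoc, Int.units_mul_self, mul_one]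
    show Equiv.Perm.sign (Fin.revPerm * σ⁻¹ * Fin.revPerm) = _
    rw [map_mul, map_mul, Equiv.Perm.sign_inv, huvu]
  -- main computation
  unfold detRight
  rw [show V (∑ σ : Equiv.Perm (Fin (n+1)),
      (Equiv.Perm.sign σ : ℤ) • (List.ofFn (fun k : Fin (n+1) => M (σ k.rev) k.rev)).prod)
    = ∑ σ : Equiv.Perm (Fin (n+1)),
      φ ((Equiv.Perm.sign σ : ℤ) • (List.ofFn (fun k : Fin (n+1) => M (σ k.rev) k.rev)).prod)
    from map_sum φ _ _]
  rw [← Function.Bijective.sum_comp (hff.bijective) (fun τ => (Equiv.Perm.sign τ : ℤ) •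
    (List.ofFn (fun k : Fin (n+1) =>
      (Matrix.of fun i j => V (M (Fin.rev j) (Fin.rev i))) (τ k.rev) k.rev)).prod)]
  apply Finset.sum_congr rfl
  intro σ _
  rw [map_zsmul, hφ, hVprod, hofRev]
  simp only [hsign, Fin.rev_rev, List.map_ofFn, Matrix.of_apply]
  simp only [hfdef, Equiv.Perm.mul_apply, Fin.revPerm_apply, Fin.rev_rev, Function.comp_def]
  congr 1
  by_cases hall : ∀ k : Fin (n+1), ((σ k : Fin (n+1)) : ℕ) ≤ (k : ℕ) + 1
  · have hK := key (n+1) σ (fun i => V (M (σ i) i)) hall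
      (fun i hi => by show V (M (σ i) i) = -1; rw [hsub (σ i) i hi, hVneg1])
    simp only [perm_apply_inv_self] at hK
    exact hK
  · push_neg at hall
    obtain ⟨k, hk⟩ := hall
    have h1 : (0 : R) ∈ List.ofFn (fun i => V (M (σ i) i)) := by
      rw [List.mem_ofFn]
      refine ⟨k, ?_⟩
      show V (M (σ k) k) = 0
      rw [hlow (σ k) k hk, hV0]
    have h2 : (0 : R) ∈ List.ofFn (fun i => V (M i (σ⁻¹ i))) := by
      rw [List.mem_ofFn]
      refine ⟨σ k, ?_⟩
      show V (M (σ k) (σ⁻¹ (σ k))) = 0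
      rw [perm_inv_apply_self, hlow (σ k) k hk, hV0]
    rw [List.prod_eq_zero h1, List.prod_eq_zero h2]
end

section
/- For each p with 1 ≤ p ≤ n+1, the square matrix K^{(p)} of size n+2-p over ℚ defined by τ^{≥p}(x^{(p)}_k) = Σ_{i=0}^{n-p+1} K^{(p)}_{ki} a_{i, p+i-1} is invertible, where τ^{≥p} is the ring endomorphism of B sending a_{ij} to itself if j-i+1 ≥ p and to 0 otherwise. Equivalently, writing -u^p (uu* - p)^{n+1-p-i}(uu*)^i = Σ_k K^{(p)}_{ki} u^p (uu*)^k, the matrix (K^{(p)}_{ki}) is invertible. -/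
/-- For `1 ≤ p ≤ n+1`, the matrix `K^{(p)}` of size `n+2-p` defined by
`K^{(p)}_{ki} = -` (coefficient of `θ^k` in `(θ-p)^{n+1-p-i} θ^i`), which expresses
`τ^{≥p}(x^{(p)}_k)` in terms of the `a_{i,p+i-1}` via
`-(u u* - p)^{n+1-p-i}(u u*)^i = Σ_k K^{(p)}_{ki} (u u*)^k`, is invertible over `ℚ`. -/
theorem stmt12 (n p : ℕ) (hp1 : 1 ≤ p) (hp2 : p ≤ n + 1)
    (K : Matrix (Fin (n + 2 - p)) (Fin (n + 2 - p)) ℚ)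
    (hK : ∀ k i, K k i =
      -(((Polynomial.X - Polynomial.C (p : ℚ)) ^ (n + 1 - p - (i : ℕ)) *
          Polynomial.X ^ (i : ℕ)).coeff (k : ℕ))) :
    IsUnit K := by
  rw [Matrix.isUnit_iff_isUnit_det]
  have htri : K.BlockTriangular OrderDual.toDual := by
    intro k i h
    rw [hK k i, Polynomial.coeff_mul_X_pow', if_neg (by exact_mod_cast not_le_of_gt h), neg_zero]
  rw [Matrix.det_of_lowerTriangular K htri]
  rw [isUnit_iff_ne_zero, Finset.prod_ne_zero_iff]
  intro i _
  rw [hK i i, Polynomial.coeff_mul_X_pow', if_pos le_rfl, Nat.sub_self,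
    Polynomial.coeff_zero_eq_eval_zero]
  simp only [Polynomial.eval_pow, Polynomial.eval_sub, Polynomial.eval_X, Polynomial.eval_C,
    zero_sub]
  apply neg_ne_zero.mpr
  apply pow_ne_zero
  simp only [neg_ne_zero, Ne, Nat.cast_eq_zero]
  omega
end

section
/- Let A = (a_{ij})_{0≤i,j≤n} be a complex matrix with -A almost triangular (a_{ij} = 0 for i > j+1, a_{j+1,j} = 1), and let Ã be the matrix of differential operators with Ã_{ij} = a_{ij} ∂_t^{j-i+1}. Then the differential operator det_right(t∂_t - Ã) ∈ ℂ[t, ∂_t] is uniquely divisible from the right by ∂_t, i.e., there is a unique L ∈ ℂ[t,∂_t] with det_right(t∂_t - Ã) = L · ∂_t. -/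
/-- The defining relation of the Weyl algebra `ℂ[t,∂_t]`: `∂ t = t ∂ + 1`. -/
def WeylRel : FreeAlgebra ℂ Bool → FreeAlgebra ℂ Bool → Prop :=
  fun x y => x = FreeAlgebra.ι ℂ true * FreeAlgebra.ι ℂ false ∧
    y = FreeAlgebra.ι ℂ false * FreeAlgebra.ι ℂ true + 1

/-- The Weyl algebra `ℂ[t,∂_t]` with `∂_t t - t ∂_t = 1`. -/
abbrev Weyl := RingQuot WeylRel

/-- The generator `∂_t` of the Weyl algebra. -/
def pa : Weyl := RingQuot.mkAlgHom ℂ WeylRel (FreeAlgebra.ι ℂ true)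

/-- The generator `t` of the Weyl algebra. -/
def tt : Weyl := RingQuot.mkAlgHom ℂ WeylRel (FreeAlgebra.ι ℂ false)

/-- Given a complex matrix `A` with `-A` almost triangular, the matrix `Ã` of
differential operators with `Ã_{ij} = a_{ij} ∂_t^{j-i+1}` (and `Ã_{ij} = 0` for
`i > j+1`, where `a_{ij} = 0` anyway). -/
noncomputable def Atilde {n : ℕ} (A : Matrix (Fin (n+1)) (Fin (n+1)) ℂ) :
    Matrix (Fin (n+1)) (Fin (n+1)) Weyl :=
  fun i j =>
    if (i : ℕ) ≤ (j : ℕ) + 1 then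
      algebraMap ℂ Weyl (A i j) * pa ^ ((j : ℕ) + 1 - (i : ℕ))
    else 0

/-- The matrix `t ∂_t - Ã`. -/
noncomputable def tdMinus {n : ℕ} (A : Matrix (Fin (n+1)) (Fin (n+1)) ℂ) :
    Matrix (Fin (n+1)) (Fin (n+1)) Weyl :=
  fun i j => (if i = j then tt * pa else 0) - Atilde A i j

set_option linter.unnecessarySimpa false
set_option linter.unusedVariables false

open Polynomial MvPolynomial

noncomputable def F1 : FreeAlgebra ℂ Bool →ₐ[ℂ] Module.End ℂ (Polynomial ℂ) :=
  FreeAlgebra.lift ℂ (fun b =>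
    (if b then (Polynomial.derivative : Polynomial ℂ →ₗ[ℂ] Polynomial ℂ)
     else LinearMap.mulLeft ℂ (Polynomial.X : Polynomial ℂ) : Module.End ℂ (Polynomial ℂ)))

lemma F1rel : ∀ ⦃x y⦄, WeylRel x y → F1 x = F1 y := by
  rintro x y ⟨hx, hy⟩
  subst hx; subst hy
  simp only [map_mul, map_add, map_one, F1, FreeAlgebra.lift_ι_apply,
    Bool.false_eq_true, if_false, if_true, eq_self_iff_true]
  refine LinearMap.ext fun p => ?_
  simp only [Module.End.mul_apply, LinearMap.mulLeft_apply, LinearMap.add_apply,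
    Module.End.one_apply, Polynomial.derivative_mul, Polynomial.derivative_X, one_mul]
  ring

noncomputable def rho1 : Weyl →ₐ[ℂ] Module.End ℂ (Polynomial ℂ) :=
  RingQuot.liftAlgHom ℂ ⟨F1, F1rel⟩

lemma rho1_pa : rho1 pa = (Polynomial.derivative : Polynomial ℂ →ₗ[ℂ] Polynomial ℂ) := by
  simp [rho1, pa, RingQuot.liftAlgHom_mkAlgHom_apply, F1]

lemma rho1_tt : rho1 tt = LinearMap.mulLeft ℂ (Polynomial.X : Polynomial ℂ) := by
  simp [rho1, tt, RingQuot.liftAlgHom_mkAlgHom_apply, F1]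

noncomputable def D2 : Module.End ℂ (MvPolynomial Bool ℂ) :=
  (MvPolynomial.pderiv (R := ℂ) false).toLinearMap + LinearMap.mulLeft ℂ (MvPolynomial.X true)

noncomputable def F2 : FreeAlgebra ℂ Bool →ₐ[ℂ] Module.End ℂ (MvPolynomial Bool ℂ) :=
  FreeAlgebra.lift ℂ (fun b =>
    (if b then D2 else LinearMap.mulLeft ℂ (MvPolynomial.X false)))

lemma F2rel : ∀ ⦃x y⦄, WeylRel x y → F2 x = F2 y := by
  rintro x y ⟨hx, hy⟩
  subst hx; subst hy
  simp only [map_mul, map_add, map_one, F2, FreeAlgebra.lift_ι_apply,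
    Bool.false_eq_true, if_false, if_true, eq_self_iff_true]
  refine LinearMap.ext fun p => ?_
  simp only [Module.End.mul_apply, LinearMap.mulLeft_apply, LinearMap.add_apply, D2,
    Module.End.one_apply, Derivation.coeFn_coe, MvPolynomial.pderiv_mul,
    MvPolynomial.pderiv_X, Pi.single_eq_same, one_mul]
  ring

noncomputable def rho2 : Weyl →ₐ[ℂ] Module.End ℂ (MvPolynomial Bool ℂ) :=
  RingQuot.liftAlgHom ℂ ⟨F2, F2rel⟩

lemma rho2_pa : rho2 pa = D2 := by
  simp [rho2, pa, RingQuot.liftAlgHom_mkAlgHom_apply, F2]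

lemma rho2_tt : rho2 tt = LinearMap.mulLeft ℂ (MvPolynomial.X false) := by
  simp [rho2, tt, RingQuot.liftAlgHom_mkAlgHom_apply, F2]

lemma pa_mul_tt : pa * tt = tt * pa + 1 := by
  have h := RingQuot.mkAlgHom_rel ℂ (s := WeylRel)
    (x := FreeAlgebra.ι ℂ true * FreeAlgebra.ι ℂ false)
    (y := FreeAlgebra.ι ℂ false * FreeAlgebra.ι ℂ true + 1) ⟨rfl, rfl⟩
  simpa [pa, tt, map_mul, map_add, map_one] using h

lemma pa_pow_mul_tt (j : ℕ) :
    pa ^ (j+1) * tt = tt * pa ^ (j+1) + ((j:ℂ)+1) • pa ^ j := by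
  induction j with
  | zero => simpa using pa_mul_tt
  | succ k ih =>
    have : pa ^ (k+2) * tt = pa * (pa ^ (k+1) * tt) := by
      rw [← mul_assoc, ← pow_succ']
    rw [this, ih, mul_add, ← mul_assoc, pa_mul_tt, add_mul, one_mul, mul_smul_comm,
      mul_assoc, ← pow_succ', ← pow_succ']
    push_cast
    module

noncomputable def mu : ℕ × ℕ → Weyl := fun p => tt ^ p.1 * pa ^ p.2

noncomputable def Sspan : Submodule ℂ Weyl := Submodule.span ℂ (Set.range mu)

lemma mu_mem (i j : ℕ) : tt ^ i * pa ^ j ∈ Sspan :=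
  Submodule.subset_span ⟨(i, j), rfl⟩

lemma one_mem_S : (1 : Weyl) ∈ Sspan := by simpa using mu_mem 0 0

lemma S_mul_pa {x : Weyl} (hx : x ∈ Sspan) : x * pa ∈ Sspan := by
  induction hx using Submodule.span_induction with
  | mem x h =>
    obtain ⟨⟨i, j⟩, rfl⟩ := h
    simpa [mu, mul_assoc, ← pow_succ] using mu_mem i (j+1)
  | zero => simpa using Submodule.zero_mem Sspan
  | add x y hx hy ihx ihy => simpa [add_mul] using Submodule.add_mem _ ihx ihy
  | smul a x hx ih => simpa [smul_mul_assoc] using Submodule.smul_mem _ a ih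

lemma S_mul_tt {x : Weyl} (hx : x ∈ Sspan) : x * tt ∈ Sspan := by
  induction hx using Submodule.span_induction with
  | mem x h =>
    obtain ⟨⟨i, j⟩, rfl⟩ := h
    simp only [mu]
    rcases j with _ | k
    · simpa [← pow_succ] using mu_mem (i+1) 0
    · rw [mul_assoc, pa_pow_mul_tt, mul_add, ← mul_assoc]
      refine Submodule.add_mem _ ?_ ?_
      · have : tt ^ i * tt = tt ^ (i+1) := (pow_succ tt i).symm
        rw [this]; exact mu_mem (i+1) (k+1)
      · rw [mul_smul_comm]
        exact Submodule.smul_mem _ _ (mu_mem i k)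
  | zero => simpa using Submodule.zero_mem Sspan
  | add x y hx hy ihx ihy => simpa [add_mul] using Submodule.add_mem _ ihx ihy
  | smul a x hx ih => simpa [smul_mul_assoc] using Submodule.smul_mem _ a ih

lemma S_top (x : Weyl) : x ∈ Sspan := by
  have key : ∀ a : FreeAlgebra ℂ Bool, ∀ x ∈ Sspan,
      x * RingQuot.mkAlgHom ℂ WeylRel a ∈ Sspan := by
    intro a
    refine FreeAlgebra.induction ℂ Bool
      (motive := fun a => ∀ x ∈ Sspan, x * RingQuot.mkAlgHom ℂ WeylRel a ∈ Sspan)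
      ?_ ?_ ?_ ?_ a
    · intro r x hx
      rw [AlgHom.commutes, Algebra.algebraMap_eq_smul_one, mul_smul_comm, mul_one]
      exact Submodule.smul_mem _ _ hx
    · rintro (_ | _) x hx
      · exact S_mul_tt hx
      · exact S_mul_pa hx
    · intro a b ha hb x hx
      rw [map_mul, ← mul_assoc]
      exact hb _ (ha _ hx)
    · intro a b ha hb x hx
      rw [map_add, mul_add]
      exact Submodule.add_mem _ (ha _ hx) (hb _ hx)
  obtain ⟨a, rfl⟩ := RingQuot.mkAlgHom_surjective ℂ WeylRel x
  simpa using key a 1 one_mem_S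

lemma pderiv_Xt_pow (m : ℕ) :
    MvPolynomial.pderiv (R := ℂ) false (MvPolynomial.X true ^ m) = 0 := by
  rw [MvPolynomial.pderiv_pow]
  have : MvPolynomial.pderiv (R := ℂ) false (MvPolynomial.X true) = 0 := by
    rw [MvPolynomial.pderiv_X]
    exact Pi.single_eq_of_ne (by simp) 1
  rw [this, mul_zero]

lemma rho2_pa_apply_pow (m : ℕ) :
    rho2 pa ((MvPolynomial.X true : MvPolynomial Bool ℂ) ^ m)
      = MvPolynomial.X true ^ (m+1) := by
  rw [rho2_pa]
  simp only [D2, LinearMap.add_apply, LinearMap.mulLeft_apply, Derivation.coeFn_coe,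
    pderiv_Xt_pow, zero_add]
  rw [← pow_succ']

lemma rho2_pa_pow (j : ℕ) :
    ((rho2 pa) ^ j) (MvPolynomial.X true : MvPolynomial Bool ℂ)
      = MvPolynomial.X true ^ (j+1) := by
  induction j with
  | zero => simp
  | succ k ih =>
    rw [pow_succ', Module.End.mul_apply, ih, rho2_pa_apply_pow]

lemma rho2_mu (i j : ℕ) :
    rho2 (mu (i, j)) (MvPolynomial.X true : MvPolynomial Bool ℂ)
      = MvPolynomial.X false ^ i * MvPolynomial.X true ^ (j+1) := by
  simp only [mu, map_mul, map_pow, Module.End.mul_apply]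
  rw [rho2_pa_pow, rho2_tt, LinearMap.pow_mulLeft, LinearMap.mulLeft_apply]

noncomputable def vfam : ℕ × ℕ → MvPolynomial Bool ℂ :=
  fun p => MvPolynomial.X false ^ p.1 * MvPolynomial.X true ^ (p.2 + 1)

lemma vfam_indep : LinearIndependent ℂ vfam := by
  have b := (MvPolynomial.basisMonomials Bool ℂ).linearIndependent
  set e : ℕ × ℕ → (Bool →₀ ℕ) :=
    fun p => Finsupp.single false p.1 + Finsupp.single true (p.2 + 1) with he_def
  have he : Function.Injective e := by
    intro p q h
    have hf := DFunLike.congr_fun h false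
    have ht := DFunLike.congr_fun h true
    simp only [he_def, Finsupp.add_apply, Finsupp.single_apply] at hf ht
    norm_num at hf ht
    exact Prod.ext hf ht
  have key := b.comp e he
  have : vfam = (MvPolynomial.basisMonomials Bool ℂ) ∘ e := by
    funext p
    simp only [Function.comp_apply, MvPolynomial.coe_basisMonomials, he_def]
    rw [show ((1:ℂ)) = 1 * 1 by ring, ← MvPolynomial.monomial_mul,
      ← MvPolynomial.X_pow_eq_monomial, ← MvPolynomial.X_pow_eq_monomial]
    rfl
  rw [this]
  exact key

noncomputable def psi : Weyl →ₗ[ℂ] MvPolynomial Bool ℂ :=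
  (LinearMap.applyₗ (MvPolynomial.X true : MvPolynomial Bool ℂ)).comp rho2.toLinearMap

lemma psi_apply (y : Weyl) : psi y = rho2 y (MvPolynomial.X true) := rfl

lemma pa_right_cancel {y : Weyl} (h : y * pa = 0) : y = 0 := by
  have hXt : rho2 pa (1 : MvPolynomial Bool ℂ) = MvPolynomial.X true := by
    rw [rho2_pa]
    simp [D2, MvPolynomial.pderiv_one]
  have h2 : psi y = 0 := by
    have h' := congrArg rho2 h
    rw [map_mul, map_zero] at h'
    rw [psi_apply, ← hXt, ← Module.End.mul_apply, h', LinearMap.zero_apply]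
  obtain ⟨c, hc⟩ := Finsupp.mem_span_range_iff_exists_finsupp.1 (S_top y)
  have h3 : Finsupp.linearCombination ℂ vfam c = 0 := by
    rw [Finsupp.linearCombination_apply]
    rw [← hc] at h2
    rw [map_finsuppSum] at h2
    calc (c.sum fun p a => a • vfam p)
        = c.sum fun p a => psi (a • mu p) := by
          refine Finsupp.sum_congr fun p _ => ?_
          rw [map_smul, psi_apply]
          rcases p with ⟨i, j⟩
          rw [rho2_mu]
          rfl
      _ = 0 := h2
  have hc0 := linearIndependent_iff.1 vfam_indep c h3
  rw [← hc, hc0]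
  simp



lemma deriv_pow_const (q : ℕ) (c : ℂ) :
    (((Polynomial.derivative : Polynomial ℂ →ₗ[ℂ] Polynomial ℂ) :
      Module.End ℂ (Polynomial ℂ)) ^ (q+1)) (Polynomial.C c) = 0 := by
  induction q with
  | zero => simp
  | succ k ih => rw [pow_succ, Module.End.mul_apply]; simp [ih]

lemma entry_const {n : ℕ} (A : Matrix (Fin (n+1)) (Fin (n+1)) ℂ)
    (h1 : ∀ i j : Fin (n+1), (i : ℕ) = (j : ℕ) + 1 → A i j = 1)
    (i j : Fin (n+1)) (c : ℂ) :
    rho1 (tdMinus A i j) (Polynomial.C c)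
      = if (i : ℕ) = (j : ℕ) + 1 then -Polynomial.C c else 0 := by
  have hfirst : rho1 (if i = j then tt * pa else 0) (Polynomial.C c) = 0 := by
    split
    · rw [map_mul, Module.End.mul_apply, rho1_pa, Polynomial.derivative_C, map_zero]
    · rw [map_zero, LinearMap.zero_apply]
  rw [tdMinus, map_sub, LinearMap.sub_apply, hfirst, zero_sub, Atilde]
  by_cases hle : (i : ℕ) ≤ (j : ℕ) + 1
  · rw [if_pos hle, map_mul, Module.End.mul_apply, map_pow]
    by_cases heq : (i : ℕ) = (j : ℕ) + 1
    · rw [if_pos heq]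
      have h0 : (j : ℕ) + 1 - (i : ℕ) = 0 := by omega
      rw [h0, pow_zero, Module.End.one_apply, h1 i j heq]
      simp
    · rw [if_neg heq]
      obtain ⟨q, hq⟩ : ∃ q, (j : ℕ) + 1 - (i : ℕ) = q + 1 := ⟨(j : ℕ) - i, by omega⟩
      rw [hq, rho1_pa, deriv_pow_const, map_zero, neg_zero]
  · rw [if_neg hle, if_neg (by omega), map_zero, LinearMap.zero_apply, neg_zero]

lemma prod_apply' {M : Type*} [AddCommMonoid M] [Module ℂ M]
    (l : List (Module.End ℂ M)) (v : M) :
    l.prod v = l.foldr (fun f w => f w) v := by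
  induction l with
  | nil => rfl
  | cons a l ih => rw [List.prod_cons, List.foldr_cons, Module.End.mul_apply, ih]

lemma ofFn_rev {α : Type*} {m : ℕ} (g : Fin m → α) :
    (List.ofFn fun k => g k.rev) = (List.ofFn g).reverse := by
  apply List.ext_getElem (by simp)
  intro i hi1 hi2
  simp only [List.getElem_ofFn, List.getElem_reverse, List.length_ofFn] at *
  congr 1
  ext
  simp only [Fin.val_rev]
  omega

lemma invariant {n : ℕ} (A : Matrix (Fin (n+1)) (Fin (n+1)) ℂ)
    (h1 : ∀ i j : Fin (n+1), (i : ℕ) = (j : ℕ) + 1 → A i j = 1)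
    (σ : Equiv.Perm (Fin (n+1))) :
    ∀ m (hm : m ≤ n + 1),
      (List.ofFn fun k : Fin m =>
          rho1 (tdMinus A (σ (Fin.castLE hm k)) (Fin.castLE hm k))).foldl
        (fun w f => f w) 1 = 0 ∨
      (∃ c : ℂ,
        (List.ofFn fun k : Fin m =>
            rho1 (tdMinus A (σ (Fin.castLE hm k)) (Fin.castLE hm k))).foldl
          (fun w f => f w) 1 = Polynomial.C c ∧
        ∀ k (hk : k < m), ((σ (Fin.castLE hm ⟨k, hk⟩)) : ℕ) = k + 1) := by
  intro m
  induction m with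
  | zero =>
    intro hm
    right
    exact ⟨1, by simp, fun k hk => absurd hk (Nat.not_lt_zero k)⟩
  | succ m ih =>
    intro hm
    have hm' : m ≤ n + 1 := Nat.le_of_succ_le hm
    have hcast : ∀ (i : Fin m), Fin.castLE hm i.castSucc = Fin.castLE hm' i :=
      fun i => Fin.ext rfl
    have hsplit :
        (List.ofFn fun k : Fin (m+1) =>
            rho1 (tdMinus A (σ (Fin.castLE hm k)) (Fin.castLE hm k))).foldl
          (fun w f => f w) 1
        = rho1 (tdMinus A (σ (Fin.castLE hm (Fin.last m))) (Fin.castLE hm (Fin.last m)))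
            ((List.ofFn fun k : Fin m =>
              rho1 (tdMinus A (σ (Fin.castLE hm' k)) (Fin.castLE hm' k))).foldl
            (fun w f => f w) 1) := by
      rw [List.ofFn_succ', List.concat_eq_append, List.foldl_concat]
      simp only [hcast]
    rcases ih hm' with h | ⟨c, hc, hk⟩
    · left
      rw [hsplit, h, map_zero]
    · have hval :
          (List.ofFn fun k : Fin (m+1) =>
              rho1 (tdMinus A (σ (Fin.castLE hm k)) (Fin.castLE hm k))).foldl
            (fun w f => f w) 1
          = if ((σ (Fin.castLE hm (Fin.last m))) : ℕ) = m + 1 then -Polynomial.C c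
            else 0 := by
        rw [hsplit, hc, entry_const A h1]
        rfl
      by_cases h : ((σ (Fin.castLE hm (Fin.last m))) : ℕ) = m + 1
      · right
        refine ⟨-c, ?_, ?_⟩
        · rw [hval, if_pos h, map_neg]
        · intro k hk'
          rcases Nat.lt_succ_iff_lt_or_eq.1 hk' with hlt | heq
          · have : Fin.castLE hm ⟨k, hk'⟩ = Fin.castLE hm' ⟨k, hlt⟩ := Fin.ext rfl
            rw [this]
            exact hk k hlt
          · subst heq
            have : Fin.castLE hm ⟨k, hk'⟩ = Fin.castLE hm (Fin.last k) := Fin.ext rfl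
            rw [this]
            exact h
      · left
        rw [hval, if_neg h]

lemma vanish {n : ℕ} (A : Matrix (Fin (n+1)) (Fin (n+1)) ℂ)
    (h1 : ∀ i j : Fin (n+1), (i : ℕ) = (j : ℕ) + 1 → A i j = 1)
    (σ : Equiv.Perm (Fin (n+1))) :
    rho1 ((List.ofFn fun k : Fin (n+1) => tdMinus A (σ k.rev) k.rev).prod) 1 = 0 := by
  have hlist : List.ofFn (⇑rho1 ∘ fun k : Fin (n+1) => tdMinus A (σ k.rev) k.rev)
      = (List.ofFn fun j : Fin (n+1) => rho1 (tdMinus A (σ j) j)).reverse := by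
    rw [← ofFn_rev]
    rfl
  rw [map_list_prod, List.map_ofFn, hlist, prod_apply', List.foldr_reverse]
  have key := invariant A h1 σ (n+1) le_rfl
  have heq : (fun k : Fin (n+1) =>
      rho1 (tdMinus A (σ (Fin.castLE le_rfl k)) (Fin.castLE le_rfl k)))
      = fun j : Fin (n+1) => rho1 (tdMinus A (σ j) j) := by
    refine funext fun k => ?_
    have : Fin.castLE le_rfl k = k := Fin.ext rfl
    rw [this]
  rw [heq] at key
  rcases key with h | ⟨c, hc, hk⟩
  · exact h
  · exfalso
    have hn := hk n (Nat.lt_succ_self n)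
    have : Fin.castLE le_rfl (⟨n, Nat.lt_succ_self n⟩ : Fin (n+1))
        = (⟨n, Nat.lt_succ_self n⟩ : Fin (n+1)) := Fin.ext rfl
    rw [this] at hn
    have := (σ (⟨n, Nat.lt_succ_self n⟩ : Fin (n+1))).isLt
    omega


lemma aeval_tt_apply_one (f : Polynomial ℂ) : rho1 (Polynomial.aeval tt f) 1 = f := by
  rw [← Polynomial.aeval_algHom_apply, rho1_tt]
  induction f using Polynomial.induction_on' with
  | add p q hp hq => rw [map_add, LinearMap.add_apply, hp, hq]
  | monomial m a =>
    rw [Polynomial.aeval_monomial, LinearMap.pow_mulLeft, Module.End.mul_apply,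
      LinearMap.mulLeft_apply, mul_one, Module.algebraMap_end_apply,
      Polynomial.smul_X_eq_monomial]


/-- For `A` with `-A` almost triangular, the operator `det_right(t∂_t - Ã)` is uniquely
divisible from the right by `∂_t`: there is a unique `L` with
`det_right(t∂_t - Ã) = L ∂_t`. -/
theorem stmt13 {n : ℕ} (A : Matrix (Fin (n+1)) (Fin (n+1)) ℂ)
    (h0 : ∀ i j : Fin (n+1), (j : ℕ) + 1 < (i : ℕ) → A i j = 0)
    (h1 : ∀ i j : Fin (n+1), (i : ℕ) = (j : ℕ) + 1 → A i j = 1) :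
    ∃! L : Weyl, detRight (tdMinus A) = L * pa := by
  have hdet0 : rho1 (detRight (tdMinus A)) 1 = 0 := by
    rw [detRight, map_sum, LinearMap.sum_apply]
    refine Finset.sum_eq_zero fun σ _ => ?_
    rw [map_zsmul, LinearMap.smul_apply, vanish A h1 σ, smul_zero]
  have hmem : detRight (tdMinus A) ∈
      LinearMap.range (Polynomial.aeval tt).toLinearMap ⊔
        LinearMap.range (LinearMap.mulRight ℂ pa) := by
    have hle : Sspan ≤ LinearMap.range (Polynomial.aeval tt).toLinearMap ⊔
        LinearMap.range (LinearMap.mulRight ℂ pa) := by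
      rw [Sspan, Submodule.span_le]
      rintro _ ⟨⟨i, j⟩, rfl⟩
      rcases j with _ | k
      · refine Submodule.mem_sup_left ⟨Polynomial.X ^ i, ?_⟩
        simp [mu]
      · refine Submodule.mem_sup_right ⟨tt ^ i * pa ^ k, ?_⟩
        simp [mu, LinearMap.mulRight_apply, pow_succ, mul_assoc]
    exact hle (S_top _)
  obtain ⟨u, hu, w, hw, hsum⟩ := Submodule.mem_sup.1 hmem
  obtain ⟨f, rfl⟩ := hu
  obtain ⟨L, rfl⟩ := hw
  simp only [AlgHom.toLinearMap_apply, LinearMap.mulRight_apply] at hsum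
  have hf : f = 0 := by
    have h := congrArg (fun z => rho1 z 1) hsum
    simp only [map_add, LinearMap.add_apply] at h
    rw [aeval_tt_apply_one, hdet0] at h
    have h2 : rho1 (L * pa) 1 = 0 := by
      rw [map_mul, Module.End.mul_apply, rho1_pa, Polynomial.derivative_one, map_zero]
    rw [h2, add_zero] at h
    exact h
  have hLpa : detRight (tdMinus A) = L * pa := by
    rw [← hsum, hf, map_zero, zero_add]
  refine ⟨L, hLpa, fun L' hL' => ?_⟩
  have hzero : (L' - L) * pa = 0 := by
    rw [sub_mul, ← hL', ← hLpa, sub_self]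
  have := pa_right_cancel hzero
  have := sub_eq_zero.1 this
  exact this
end

section
/- In the Weyl algebra ℂ[w, ∂_w], for any polynomial g and integer p ≥ 1, one has g(-w∂_w)(w²∂_w)^{p-1} w = w^p g(-w∂_w - p) ∏_{l=1}^{p-1}(w∂_w + l). -/
/-- The generator `∂_w` of the Weyl algebra. -/
def dw : Weyl := RingQuot.mkAlgHom ℂ WeylRel (FreeAlgebra.ι ℂ true)

/-- The generator `w` of the Weyl algebra. -/
def ww : Weyl := RingQuot.mkAlgHom ℂ WeylRel (FreeAlgebra.ι ℂ false)

lemma weyl_comm : dw * ww = ww * dw + 1 := by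
  have hr : WeylRel (FreeAlgebra.ι ℂ true * FreeAlgebra.ι ℂ false)
      (FreeAlgebra.ι ℂ false * FreeAlgebra.ι ℂ true + 1) := ⟨rfl, rfl⟩
  have h := RingQuot.mkAlgHom_rel ℂ hr
  simpa [dw, ww, map_mul, map_add, map_one] using h

noncomputable def EE : Weyl := ww * dw

lemma E_ww : EE * ww = ww * (EE + 1) := by
  have : ww * (dw * ww) = ww * (ww * dw + 1) := by rw [weyl_comm]
  simpa [EE, mul_assoc, mul_add, mul_one] using this

lemma E_ww_pow (n : ℕ) : EE * ww ^ n = ww ^ n * (EE + n) := by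
  induction n with
  | zero => simp
  | succ k ih =>
    rw [pow_succ, ← mul_assoc, ih, mul_assoc, add_mul, E_ww,
      (Nat.cast_commute k ww).eq, ← mul_add, ← mul_assoc, ← pow_succ]
    push_cast
    rw [add_assoc, add_comm (1 : Weyl)]

lemma shift_aeval {x y : Weyl} (h : x * ww = ww * y) (f : Polynomial ℂ) :
    Polynomial.aeval x f * ww = ww * Polynomial.aeval y f := by
  have hpow : ∀ n : ℕ, x ^ n * ww = ww * y ^ n := by
    intro n
    induction n with
    | zero => simp
    | succ k ih =>
      rw [pow_succ, mul_assoc, h, ← mul_assoc, ih, mul_assoc, ← pow_succ]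
  induction f using Polynomial.induction_on' with
  | add p q hp hq => simp [map_add, add_mul, mul_add, hp, hq]
  | monomial n a =>
    simp only [Polynomial.aeval_monomial]
    rw [mul_assoc, hpow n, ← mul_assoc, ← mul_assoc,
      (Algebra.commutes a ww).symm]

lemma gen_step {R : Type*} [Ring R] (E w m : R) (h : E * w = w * (E + 1))
    (hm : m * w = w * m) : (-E - m) * w = w * (-E - (m + 1)) := by
  rw [sub_mul, neg_mul, h, hm]
  noncomm_ring

lemma shift_step (m : ℕ) : (-EE - (m : Weyl)) * ww = ww * (-EE - ((m + 1 : ℕ) : Weyl)) := by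
  have := gen_step EE ww (m : Weyl) E_ww (Nat.cast_commute m ww).eq
  push_cast
  exact this

lemma shift_pow (f : Polynomial ℂ) (m n : ℕ) :
    Polynomial.aeval (-EE - (m : Weyl)) f * ww ^ n
      = ww ^ n * Polynomial.aeval (-EE - ((m + n : ℕ) : Weyl)) f := by
  induction n generalizing m with
  | zero => simp
  | succ k ih =>
    rw [pow_succ, ← mul_assoc, ih m, mul_assoc, shift_aeval (shift_step (m + k)) f,
      ← mul_assoc, ← pow_succ]
    norm_num [add_assoc]

lemma pow_key (k : ℕ) :
    (ww * EE) ^ k * ww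
      = ww ^ (k + 1) * ((List.range k).map (fun l => EE + ((l + 1 : ℕ) : Weyl))).prod := by
  induction k with
  | zero => simp
  | succ k ih =>
    have hcomm : Commute (EE + ((k + 1 : ℕ) : Weyl))
        ((List.range k).map (fun l => EE + ((l + 1 : ℕ) : Weyl))).prod := by
      apply Commute.list_prod_right
      intro x hx
      simp only [List.mem_map] at hx
      obtain ⟨l, _, rfl⟩ := hx
      exact Commute.add_left
        ((Commute.refl EE).add_right ((Nat.cast_commute (l + 1) EE).symm))
        (Nat.cast_commute _ _)
    rw [pow_succ', mul_assoc, ih, ← mul_assoc, mul_assoc ww, E_ww_pow (k + 1),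
      ← mul_assoc, ← pow_succ', mul_assoc, hcomm.eq, ← mul_assoc, mul_assoc,
      List.range_succ, List.map_append, List.prod_append]
    simp [mul_assoc]

/-- In `ℂ[w,∂_w]`, for any polynomial `g` and `p ≥ 1`:
`g(-w∂_w)(w²∂_w)^{p-1} w = w^p g(-w∂_w - p) ∏_{l=1}^{p-1}(w∂_w + l)`. -/
theorem stmt17 (g : Polynomial ℂ) (p : ℕ) (hp : 1 ≤ p) :
    Polynomial.aeval (-(ww * dw)) g * (ww ^ 2 * dw) ^ (p - 1) * ww =
      ww ^ p * Polynomial.aeval (-(ww * dw) - (p : Weyl)) g *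
        (((List.range (p - 1)).map (fun l => ww * dw + ((l + 1 : ℕ) : Weyl))).prod) := by
  obtain ⟨k, rfl⟩ : ∃ k, p = k + 1 := ⟨p - 1, (Nat.succ_pred_eq_of_pos hp).symm⟩
  have hww2 : ww ^ 2 * dw = ww * EE := by rw [pow_two, mul_assoc]; rfl
  have hE : -(ww * dw) = -EE - ((0 : ℕ) : Weyl) := by simp [EE]
  simp only [Nat.add_sub_cancel, hww2, hE]
  rw [mul_assoc, pow_key k, ← mul_assoc, shift_pow g 0 (k + 1), mul_assoc]
  norm_num
  simp [EE, mul_assoc]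
end

section
/- Let A be a diagonalizable complex (n+1)×(n+1) matrix with -A almost triangular and A = A^τ (symmetric about the anti-diagonal), with diagonalization A = C Λ C^{-1}, Λ = diag(λ_0,...,λ_n), normalized so that CᵗJC = I where J is the anti-diagonal permutation matrix. Let T = diag(0,1,...,n) and S_j = -T C E_j C^{-1}, where E_j has a 1 in position (j,j) and zeros elsewhere. Then: (1) each column u_i of C with i ≠ j is an eigenvector of S_j with eigenvalue 0; (2) T u_j is an eigenvector of S_j with eigenvalue -n/2; in particular trace(S_j) = -n/2. -/
open Matrix

/-- The anti-diagonal permutation matrix `J`, `J_{ij} = 1` iff `i+j = n`. -/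
def Jmat (n : ℕ) : Matrix (Fin (n+1)) (Fin (n+1)) ℂ :=
  Matrix.of fun i j => if (i : ℕ) + (j : ℕ) = n then 1 else 0

/-- The matrix `T = diag(0,1,…,n)`. -/
def Tmat (n : ℕ) : Matrix (Fin (n+1)) (Fin (n+1)) ℂ :=
  Matrix.diagonal fun i => ((i : ℕ) : ℂ)

lemma Jsymm (n : ℕ) : (Jmat n)ᵀ = Jmat n := by
  ext i j
  simp only [Jmat, transpose_apply, of_apply]
  congr 1
  simp [Nat.add_comm]

lemma Tsymm (n : ℕ) : (Tmat n)ᵀ = Tmat n := by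
  simp [Tmat]

lemma JT_TJ (n : ℕ) : Jmat n * Tmat n + Tmat n * Jmat n = (n : ℂ) • Jmat n := by
  ext i j
  simp only [Jmat, Tmat, Matrix.add_apply, mul_diagonal, diagonal_mul, Matrix.smul_apply, of_apply,
    smul_eq_mul]
  split_ifs with h
  · simp only [one_mul, mul_one]
    norm_cast
    omega
  · simp

lemma Mjj (n : ℕ) (C : Matrix (Fin (n+1)) (Fin (n+1)) ℂ)
    (hnorm : Cᵀ * Jmat n * C = 1) (j : Fin (n+1)) :
    (C⁻¹ * Tmat n * C) j j = (n : ℂ) / 2 := by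
  have hCinv : C⁻¹ = Cᵀ * Jmat n := Matrix.inv_eq_left_inv hnorm
  set M := Cᵀ * Jmat n * Tmat n * C with hM
  have hMT : Mᵀ = Cᵀ * Tmat n * Jmat n * C := by
    rw [hM]
    simp [Matrix.transpose_mul, Jsymm, Tsymm, Matrix.mul_assoc]
  have hsum : M + Mᵀ = (n : ℂ) • (1 : Matrix (Fin (n+1)) (Fin (n+1)) ℂ) := by
    rw [hMT, hM]
    have h1 : Cᵀ * Jmat n * Tmat n * C + Cᵀ * Tmat n * Jmat n * C
        = Cᵀ * (Jmat n * Tmat n + Tmat n * Jmat n) * C := by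
      simp only [Matrix.mul_add, Matrix.add_mul, Matrix.mul_assoc]
    rw [h1, JT_TJ, Matrix.mul_smul, Matrix.smul_mul, hnorm]
  have h2 : M j j + M j j = (n : ℂ) := by
    have := congrArg (fun X : Matrix (Fin (n+1)) (Fin (n+1)) ℂ => X j j) hsum
    simpa using this
  have h3 : M j j = (n : ℂ) / 2 := by linear_combination h2 / 2
  rw [hCinv]
  exact h3

/-- Let `A` be diagonalizable with `-A` almost triangular and `A = A^τ = J Aᵀ J`,
`A = C Λ C⁻¹` with `Λ = diag(λ)`, normalized so that `Cᵀ J C = 1`. Let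
`S_j = -T C E_j C⁻¹`. Then (1) the columns `u_i` of `C` with `i ≠ j` are eigenvectors of
`S_j` with eigenvalue `0`; (2) `T u_j` is an eigenvector of `S_j` with eigenvalue `-n/2`;
in particular `trace(S_j) = -n/2`. -/
theorem stmt19 (n : ℕ) (A C : Matrix (Fin (n+1)) (Fin (n+1)) ℂ) (lam : Fin (n+1) → ℂ)
    (h0 : ∀ i j : Fin (n+1), (j : ℕ) + 1 < (i : ℕ) → A i j = 0)
    (h1 : ∀ i j : Fin (n+1), (i : ℕ) = (j : ℕ) + 1 → A i j = 1)
    (hC : IsUnit C)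
    (hdiag : A = C * Matrix.diagonal lam * C⁻¹)
    (hsym : A = Jmat n * Aᵀ * Jmat n)
    (hnorm : Cᵀ * Jmat n * C = 1)
    (S : Fin (n+1) → Matrix (Fin (n+1)) (Fin (n+1)) ℂ)
    (hS : ∀ j, S j = -(Tmat n * C * Matrix.single j j 1 * C⁻¹)) :
    (∀ i j : Fin (n+1), i ≠ j →
        (S j).mulVec (fun k => C k i) = (0 : ℂ) • (fun k => C k i)) ∧
    (∀ j : Fin (n+1),
        (S j).mulVec ((Tmat n).mulVec (fun k => C k j)) =
          (-(n / 2 : ℂ)) • (Tmat n).mulVec (fun k => C k j)) ∧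
    (∀ j : Fin (n+1), Matrix.trace (S j) = -(n / 2 : ℂ)) := by
  have hCinv : C⁻¹ = Cᵀ * Jmat n := Matrix.inv_eq_left_inv hnorm
  have hinvC : C⁻¹ * C = 1 := by rw [hCinv]; exact hnorm
  have hcol : ∀ i : Fin (n+1), (fun k => C k i) = C.mulVec (Pi.single i 1) := by
    intro i; funext k; simp
  refine ⟨?_, ?_, ?_⟩
  · intro i j hij
    rw [hcol, Matrix.mulVec_mulVec, hS, zero_smul]
    have h2 : -(Tmat n * C * Matrix.single j j 1 * C⁻¹) * C
        = -(Tmat n * C * Matrix.single j j 1) := by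
      rw [neg_mul, Matrix.mul_assoc _ (C⁻¹) C, hinvC, Matrix.mul_one]
    rw [h2]
    funext k
    simp [hij]
  · intro j
    rw [hcol, hS]
    simp only [Matrix.mulVec_mulVec]
    have hM := Mjj n C hnorm j
    have e1 : -(Tmat n * C * Matrix.single j j 1 * C⁻¹) * (Tmat n * C)
        = -(Tmat n * C * (Matrix.single j j 1 * (C⁻¹ * Tmat n * C))) := by
      simp only [neg_mul, Matrix.mul_assoc]
    rw [e1]
    funext k
    simp only [Matrix.mulVec_single, mul_one, Pi.smul_apply, smul_eq_mul,
      Matrix.neg_apply, op_smul_eq_mul, Matrix.col_apply]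
    rw [Matrix.mul_apply]
    have hsum : ∑ a, (Tmat n * C) k a *
          ((Matrix.single j j 1 : Matrix (Fin (n+1)) (Fin (n+1)) ℂ) * (C⁻¹ * Tmat n * C)) a j
        = (Tmat n * C) k j * ((n : ℂ) / 2) := by
      rw [Finset.sum_eq_single j]
      · rw [Matrix.single_mul_apply_same, hM, one_mul]
      · intro a _ ha
        simp [ha]
      · intro h; exact absurd (Finset.mem_univ j) h
    rw [hsum]
    ring
  · intro j
    rw [hS, Matrix.trace_neg]
    have h3 : Matrix.trace (Tmat n * C * Matrix.single j j 1 * C⁻¹)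
        = Matrix.trace (C⁻¹ * Tmat n * C * Matrix.single j j 1) := by
      rw [Matrix.trace_mul_comm]
      simp only [Matrix.mul_assoc]
    have h4 : Matrix.trace (C⁻¹ * Tmat n * C * Matrix.single j j 1)
        = (C⁻¹ * Tmat n * C) j j := by
      rw [Matrix.trace]
      rw [Finset.sum_eq_single j]
      · simp
      · intro a _ ha
        simp [Matrix.diag, ha]
      · intro h; exact absurd (Finset.mem_univ j) h
    rw [h3, h4, Mjj n C hnorm j]
end
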